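/- arXiv:1903.11230 — 3 statements merged into one kernel-verified Lean document; each statement's English description precedes it below -/
import Mathlib

section
/- Let R_{ijkl} be an algebraic curvature tensor on ℝ^n and let 0 ≤ ν ≤ n. Then the trace of the endomorphism A_ν of Λ^ν(ℝ^n) equals C(n−2, ν−1)·S, where S is the scalar curvature of R. -/
open ExteriorAlgebra

/-- The wedge `e_{ι 0} ∧ ⋯ ∧ e_{ι (ν-1)}` of standard basis vectors of `ℝ^n`,
as an element of the `ν`-th exterior power `⋀[ℝ]^ν (ℝ^n)`. -/
noncomputable def stdWedge (n ν : ℕ) (ι : Fin ν → Fin n) : ⋀[ℝ]^ν (Fin n → ℝ) :=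
  ⟨ExteriorAlgebra.ιMulti ℝ ν (fun a => Pi.single (ι a) (1 : ℝ)),
   ExteriorAlgebra.ιMulti_range ℝ ν ⟨_, rfl⟩⟩

/-- The Ricci tensor `Ric_{ij} = ∑_p R_{ipjp}` of an algebraic curvature tensor
(indices raised with the Kronecker delta). -/
def ricci (n : ℕ) (R : Fin n → Fin n → Fin n → Fin n → ℝ) (i j : Fin n) : ℝ :=
  ∑ p : Fin n, R i p j p

/-- The scalar curvature `S = ∑_i Ric_{ii}`. -/
def scalarCurv (n : ℕ) (R : Fin n → Fin n → Fin n → Fin n → ℝ) : ℝ :=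
  ∑ i : Fin n, ricci n R i i

/-- Binomial coefficient `C(m, k)` defined for all integers, with the convention
that it vanishes if `m < 0`, `k < 0` or `m < k`. -/
def chooseZ (m k : ℤ) : ℤ :=
  if 0 ≤ m ∧ 0 ≤ k ∧ k ≤ m then (m.toNat.choose k.toNat : ℤ) else 0

/-- The value prescribed for the endomorphism `A_ν` of formula (7.2) of the paper on
the basis wedge `e_{ι 0} ∧ ⋯ ∧ e_{ι (ν-1)}`:
`A_ν = ∑_a A^a_ν − 2 ∑_{a<b} A^{ab}_ν`, where `A^a_ν` replaces the `a`-th factor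
`e_{i_a}` by `∑_p Ric_{i_a p} e_p`, and `A^{ab}_ν` replaces the factors `e_{i_a}`,
`e_{i_b}` by `e_p`, `e_q` with coefficient `R_{i_a p i_b q}`. -/
noncomputable def AnuVal (n ν : ℕ) (R : Fin n → Fin n → Fin n → Fin n → ℝ)
    (ι : Fin ν → Fin n) : ⋀[ℝ]^ν (Fin n → ℝ) :=
  (∑ a : Fin ν, ∑ p : Fin n,
      ricci n R (ι a) p • stdWedge n ν (Function.update ι a p)) -
    (2 : ℝ) • ∑ a : Fin ν, ∑ b : Fin ν,
      if a < b then
        ∑ p : Fin n, ∑ q : Fin n,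
          R (ι a) p (ι b) q •
            stdWedge n ν (Function.update (Function.update ι a p) b q)
      else 0

section Aux
open Function

variable (n ν : ℕ)

abbrev Idx := {s : Finset (Fin n) // s.card = ν}

def incl (s : Idx n ν) : Fin ν → Fin n := fun a => (s.1.orderIsoOfFin s.2 a : Fin n)

lemma incl_strictMono (s : Idx n ν) : StrictMono (incl n ν s) :=
  fun a b h => by exact_mod_cast (s.1.orderIsoOfFin s.2).strictMono h

lemma incl_mem (s : Idx n ν) (a : Fin ν) : incl n ν s a ∈ s.1 := (s.1.orderIsoOfFin s.2 a).2

noncomputable def coordAlt (s : Idx n ν) : (Fin n → ℝ) [⋀^Fin ν]→ₗ[ℝ] ℝ :=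
  (Matrix.detRowAlternating (R := ℝ) (n := Fin ν)).compLinearMap
    (LinearMap.funLeft ℝ ℝ (incl n ν s))

noncomputable def coordFun (s : Idx n ν) : ExteriorAlgebra ℝ (Fin n → ℝ) →ₗ[ℝ] ℝ :=
  ExteriorAlgebra.liftAlternating
    (Function.update (fun i => (0 : (Fin n → ℝ) [⋀^Fin i]→ₗ[ℝ] ℝ)) ν (coordAlt n ν s))

noncomputable def coordL (s : Idx n ν) : ⋀[ℝ]^ν (Fin n → ℝ) →ₗ[ℝ] ℝ :=
  (coordFun n ν s).comp (Submodule.subtype _)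

lemma coordL_stdWedge (s : Idx n ν) (κ : Fin ν → Fin n) :
    coordL n ν s (stdWedge n ν κ) =
      Matrix.det (Matrix.of fun a b => if incl n ν s b = κ a then (1:ℝ) else 0) := by
  have h1 : coordL n ν s (stdWedge n ν κ) = coordAlt n ν s (fun a => Pi.single (κ a) 1) := by
    simp only [coordL, coordFun, LinearMap.comp_apply, Submodule.subtype_apply, stdWedge,
      liftAlternating_apply_ιMulti, Function.update_self]
  rw [h1]
  simp only [coordAlt, AlternatingMap.compLinearMap_apply, Matrix.detRowAlternating,
    LinearMap.funLeft_apply]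
  congr 1
  ext a b
  simp [Matrix.of_apply, Pi.single_apply]

noncomputable def E {n ν : ℕ} (ι κ : Fin ν → Fin n) : ℝ :=
  Matrix.det (Matrix.of fun a b => if ι b = κ a then (1:ℝ) else 0)

lemma det_perm_ind {ν : ℕ} (e : Equiv.Perm (Fin ν)) :
    Matrix.det (Matrix.of fun x y => if y = e x then (1:ℝ) else 0) = Equiv.Perm.sign e := by
  have : (Matrix.of fun x y => if y = e x then (1:ℝ) else 0) = e.permMatrix ℝ := by
    ext x y
    simp [Equiv.Perm.permMatrix, PEquiv.toMatrix, Equiv.toPEquiv, Option.mem_some_iff, eq_comm]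
  rw [this, Matrix.det_permutation]

lemma det_ind {ν : ℕ} (π : Fin ν → Fin ν) :
    Matrix.det (Matrix.of fun x y => if y = π x then (1:ℝ) else 0) =
      if h : Function.Injective π then
        ((Equiv.Perm.sign (Equiv.ofBijective π (Finite.injective_iff_bijective.mp h)) : ℤ) : ℝ)
      else 0 := by
  split_ifs with h
  · have := det_perm_ind (Equiv.ofBijective π (Finite.injective_iff_bijective.mp h))
    simpa using this
  · obtain ⟨x, y, hxy, hne⟩ : ∃ x y, π x = π y ∧ x ≠ y := by
      simp only [Function.Injective, not_forall] at h
      obtain ⟨x, y, h1, h2⟩ := h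
      exact ⟨x, y, h1, h2⟩
    rw [Matrix.det_zero_of_row_eq hne (by ext z; simp [Matrix.of_apply, hxy])]

lemma E_comp {n ν : ℕ} {ι : Fin ν → Fin n} (hι : Function.Injective ι) (π : Fin ν → Fin ν) :
    E ι (ι ∘ π) =
      if h : Function.Injective π then
        ((Equiv.Perm.sign (Equiv.ofBijective π (Finite.injective_iff_bijective.mp h)) : ℤ) : ℝ)
      else 0 := by
  rw [← det_ind]
  unfold E
  congr 1
  ext a b
  simp only [Matrix.of_apply, comp_apply]
  exact if_congr ⟨fun h => hι h, fun h => h ▸ rfl⟩ rfl rfl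

lemma E_zero_row {n ν : ℕ} {ι κ : Fin ν → Fin n} (a : Fin ν) (h : κ a ∉ Set.range ι) :
    E ι κ = 0 := by
  apply Matrix.det_eq_zero_of_row_eq_zero a
  intro b
  simp only [Matrix.of_apply, ite_eq_right_iff]
  intro hb
  exact absurd ⟨b, hb⟩ h

lemma E_self {n ν : ℕ} {ι : Fin ν → Fin n} (hι : Function.Injective ι) : E ι ι = 1 := by
  have := E_comp hι id
  simp only [Function.injective_id, dif_pos] at this
  rw [show ι ∘ id = ι from rfl] at this
  rw [this, show Equiv.ofBijective (id : Fin ν → Fin ν) (Finite.injective_iff_bijective.mp Function.injective_id) = Equiv.refl _ from Equiv.ext fun x => rfl]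
  simp

lemma E_update {n ν : ℕ} {ι : Fin ν → Fin n} (hι : Function.Injective ι) (a : Fin ν) (p : Fin n) :
    E ι (Function.update ι a p) = if p = ι a then 1 else 0 := by
  by_cases hp : p ∈ Set.range ι
  · obtain ⟨c, rfl⟩ := hp
    by_cases hca : c = a
    · subst hca
      rw [Function.update_eq_self, E_self hι, if_pos rfl]
    · have hπ : Function.update ι a (ι c) = ι ∘ Function.update id a c := by
        ext x
        by_cases hx : x = a
        · subst hx; simp
        · simp [hx]
      rw [hπ, E_comp hι]
      have hni : ¬ Function.Injective (Function.update id a c) := by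
        intro h
        have : Function.update id a c a = Function.update id a c c := by
          simp [Function.update_of_ne (Ne.symm (by exact fun h' => hca h'.symm) : c ≠ a)]
        exact hca (h this).symm
      rw [dif_neg hni, if_neg (fun h => hca (hι h))]
  · rw [E_zero_row a (by simpa using hp), if_neg (fun h => hp ⟨a, h.symm⟩)]

lemma not_inj_aux {ν : ℕ} {a b c d : Fin ν} (hab : a ≠ b)
    (h1 : ¬(c = a ∧ d = b)) (h2 : ¬(c = b ∧ d = a)) :
    ¬ Function.Injective (Function.update (Function.update id a c) b d) := by
  set π := Function.update (Function.update id a c) b d with hπ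
  have πa : π a = c := by rw [hπ, Function.update_of_ne hab, Function.update_self]
  have πb : π b = d := by rw [hπ, Function.update_self]
  have πx : ∀ x, x ≠ a → x ≠ b → π x = x := fun x hxa hxb => by
    rw [hπ, Function.update_of_ne hxb, Function.update_of_ne hxa, id]
  intro hinj
  by_cases hcd : c = d
  · exact hab (hinj (by rw [πa, πb, hcd]))
  by_cases hca : c = a
  · have hdb : d ≠ b := fun hdb => h1 ⟨hca, hdb⟩
    by_cases hda : d = a
    · exact hab (hinj (by rw [πa, πb, hca, hda]))
    · exact hdb (hinj (by rw [πx d hda hdb, πb]))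
  by_cases hcb : c = b
  · have hda : d ≠ a := fun hda => h2 ⟨hcb, hda⟩
    have hdb : d ≠ b := fun hdb => hcd (hcb.trans hdb.symm)
    exact hdb (hinj (by rw [πx d hda hdb, πb]))
  · exact hca (hinj (by rw [πx c hca hcb, πa]))

lemma E_update2 {n ν : ℕ} {ι : Fin ν → Fin n} (hι : Function.Injective ι) {a b : Fin ν}
    (hab : a ≠ b) (p q : Fin n) :
    E ι (Function.update (Function.update ι a p) b q) =
      if p = ι a ∧ q = ι b then 1 else if p = ι b ∧ q = ι a then -1 else 0 := by
  set κ := Function.update (Function.update ι a p) b q with hκ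
  have hκa : κ a = p := by rw [hκ, Function.update_of_ne hab, Function.update_self]
  have hκb : κ b = q := by rw [hκ, Function.update_self]
  by_cases hp : p ∈ Set.range ι
  · by_cases hq : q ∈ Set.range ι
    · obtain ⟨c, hc⟩ := hp
      obtain ⟨d, hd⟩ := hq
      have hπ : κ = ι ∘ Function.update (Function.update id a c) b d := by
        ext x
        by_cases hxb : x = b
        · rw [hxb]
          simp only [Function.comp_apply, Function.update_self, hκb, hd]
        · by_cases hxa : x = a
          · rw [hxa]
            simp only [Function.comp_apply, Function.update_of_ne hab, Function.update_self,
              hκa, hc]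
          · simp only [hκ, Function.comp_apply, Function.update_of_ne hxb,
              Function.update_of_ne hxa, id]
      rw [hπ, E_comp hι]
      by_cases hc1 : c = a ∧ d = b
      · obtain ⟨hca, hdb⟩ := hc1
        have hid : Function.update (Function.update id a c) b d = (id : Fin ν → Fin ν) := by
          ext x
          by_cases hxb : x = b
          · rw [hxb]; simp [hdb]
          · by_cases hxa : x = a
            · rw [hxa]; simp [hab, hca]
            · simp [hxa, hxb]
        rw [hid, dif_pos Function.injective_id,
          show Equiv.ofBijective (id : Fin ν → Fin ν)
            (Finite.injective_iff_bijective.mp Function.injective_id) = Equiv.refl _ from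
            Equiv.ext fun x => rfl,
          if_pos ⟨by rw [← hc, hca], by rw [← hd, hdb]⟩]
        simp
      · by_cases hc2 : c = b ∧ d = a
        · obtain ⟨hcb, hda⟩ := hc2
          have hsw : Function.update (Function.update id a c) b d = ⇑(Equiv.swap a b) := by
            ext x
            by_cases hxb : x = b
            · rw [hxb]; simp [hda, Equiv.swap_apply_right]
            · by_cases hxa : x = a
              · rw [hxa]
                simp [Function.update_of_ne hab, hcb, Equiv.swap_apply_left]
              · simp [hxa, hxb, Equiv.swap_apply_of_ne_of_ne hxa hxb]
          rw [hsw, dif_pos (Equiv.swap a b).injective,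
            show Equiv.ofBijective (⇑(Equiv.swap a b))
              (Finite.injective_iff_bijective.mp (Equiv.swap a b).injective) = Equiv.swap a b
              from Equiv.ext fun x => rfl, Equiv.Perm.sign_swap hab]
          have h1 : ¬(p = ι a ∧ q = ι b) := by
            rintro ⟨h1', -⟩
            have hba : ι b = ι a := by rw [← hcb, hc, h1']
            exact hab (hι hba).symm
          rw [if_neg h1, if_pos ⟨by rw [← hc, hcb], by rw [← hd, hda]⟩]
          simp
        · rw [dif_neg (not_inj_aux hab hc1 hc2)]
          have h1 : ¬(p = ι a ∧ q = ι b) := by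
            rintro ⟨h1', h2'⟩
            exact hc1 ⟨hι (hc.trans h1'), hι (hd.trans h2')⟩
          have h2 : ¬(p = ι b ∧ q = ι a) := by
            rintro ⟨h1', h2'⟩
            exact hc2 ⟨hι (hc.trans h1'), hι (hd.trans h2')⟩
          rw [if_neg h1, if_neg h2]
    · rw [E_zero_row b (by rwa [hκb])]
      have h1 : ¬(p = ι a ∧ q = ι b) := fun ⟨_, h2⟩ => hq ⟨b, h2.symm⟩
      have h2 : ¬(p = ι b ∧ q = ι a) := fun ⟨_, h2⟩ => hq ⟨a, h2.symm⟩
      rw [if_neg h1, if_neg h2]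
  · rw [E_zero_row a (by rwa [hκa])]
    have h1 : ¬(p = ι a ∧ q = ι b) := fun ⟨h1', _⟩ => hp ⟨a, h1'.symm⟩
    have h2 : ¬(p = ι b ∧ q = ι a) := fun ⟨h1', _⟩ => hp ⟨b, h1'.symm⟩
    rw [if_neg h1, if_neg h2]

lemma coordL_stdWedge_E (s : Idx n ν) (κ : Fin ν → Fin n) :
    coordL n ν s (stdWedge n ν κ) = E (incl n ν s) κ := coordL_stdWedge n ν s κ

lemma incl_inj (s : Idx n ν) : Function.Injective (incl n ν s) :=
  (incl_strictMono n ν s).injective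

noncomputable def w (s : Idx n ν) : ⋀[ℝ]^ν (Fin n → ℝ) := stdWedge n ν (incl n ν s)

lemma coordL_w (s t : Idx n ν) : coordL n ν s (w n ν t) = if s = t then 1 else 0 := by
  rw [w, coordL_stdWedge_E]
  by_cases hst : s = t
  · rw [hst, if_pos rfl, E_self (incl_inj n ν t)]
  · rw [if_neg hst]
    have hts : ¬ t.1 ⊆ s.1 := by
      intro hsub
      exact hst (Subtype.ext (Finset.eq_of_subset_of_card_le hsub (by rw [s.2, t.2])).symm)
    obtain ⟨x, hxt, hxs⟩ := Finset.not_subset.mp hts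
    set a := (t.1.orderIsoOfFin t.2).symm ⟨x, hxt⟩ with ha
    have hta : incl n ν t a = x := by
      rw [incl, ha]
      simp
    apply E_zero_row a
    rw [hta]
    rintro ⟨b, hb⟩
    exact hxs (hb ▸ incl_mem n ν s b)

lemma stdWedge_mem_span (r : Fin ν → Fin n) :
    ExteriorAlgebra.ιMulti ℝ ν (fun a => Pi.single (r a) (1:ℝ)) ∈
      (Submodule.span ℝ (Set.range (w n ν))).map (Submodule.subtype _) := by
  by_cases hr : Function.Injective r
  · set s : Idx n ν := ⟨Finset.univ.image r, by
      rw [Finset.card_image_of_injective _ hr, Finset.card_univ, Fintype.card_fin]⟩ with hs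
    have hmem : ∀ a, r a ∈ s.1 := fun a => Finset.mem_image.mpr ⟨a, Finset.mem_univ a, rfl⟩
    set r' : Fin ν → {x // x ∈ s.1} := fun a => ⟨r a, hmem a⟩ with hr'
    have hbij : Function.Bijective r' := by
      constructor
      · intro x y hxy
        exact hr (congrArg Subtype.val hxy)
      · rintro ⟨x, hx⟩
        obtain ⟨a, -, ha⟩ := Finset.mem_image.mp hx
        exact ⟨a, Subtype.ext ha⟩
    set τ : Equiv.Perm (Fin ν) :=
      (Equiv.ofBijective r' hbij).trans (s.1.orderIsoOfFin s.2).toEquiv.symm with hτ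
    have hcomp : ∀ a, incl n ν s (τ a) = r a := by
      intro a
      simp only [hτ, incl, Equiv.trans_apply, RelIso.coe_fn_toEquiv]
      exact congrArg Subtype.val ((s.1.orderIsoOfFin s.2).apply_symm_apply (r' a))
    have hfun : (fun a => Pi.single (r a) (1:ℝ)) =
        (fun a => Pi.single (incl n ν s a) (1:ℝ)) ∘ τ := by
      ext a j
      rw [comp_apply, hcomp]
    rw [hfun, AlternatingMap.map_perm]
    refine Submodule.smul_mem _ _ ?_
    exact ⟨w n ν s, Submodule.subset_span ⟨s, rfl⟩, rfl⟩
  · have h2 : ¬Function.Injective fun a => (Pi.single (r a) (1:ℝ) : Fin n → ℝ) := by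
      simp only [Function.Injective, not_forall] at hr ⊢
      obtain ⟨x, y, hxy, hne⟩ := hr
      exact ⟨x, y, by simp only [hxy], hne⟩
    rw [AlternatingMap.map_eq_zero_of_not_injective _ _ h2]
    exact Submodule.zero_mem _

lemma span_w_top : Submodule.span ℝ (Set.range (w n ν)) = ⊤ := by
  rw [Submodule.eq_top_iff']
  rintro ⟨x, hx⟩
  have hx' : x ∈ ⋀[ℝ]^ν (Fin n → ℝ) := hx
  rw [← ExteriorAlgebra.ιMulti_span_fixedDegree] at hx'
  have hle : Submodule.span ℝ (Set.range (ExteriorAlgebra.ιMulti ℝ ν (M := Fin n → ℝ))) ≤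
      (Submodule.span ℝ (Set.range (w n ν))).map (Submodule.subtype _) := by
    rw [Submodule.span_le]
    rintro _ ⟨v, rfl⟩
    have hv : v = fun a => ∑ i : Fin n, v a i • (Pi.single i (1:ℝ) : Fin n → ℝ) := by
      ext a j
      simp [Pi.single_apply]
    have h1 := MultilinearMap.map_sum
      (ExteriorAlgebra.ιMulti ℝ ν (M := Fin n → ℝ)).toMultilinearMap
      (g := fun a i => v a i • (Pi.single i (1:ℝ) : Fin n → ℝ))
    simp only [AlternatingMap.coe_multilinearMap] at h1
    rw [← hv] at h1
    rw [h1]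
    apply Submodule.sum_mem
    intro r _
    have h2 := (ExteriorAlgebra.ιMulti ℝ ν (M := Fin n → ℝ)).map_smul_univ
      (fun a => v a (r a)) (fun a => Pi.single (r a) (1:ℝ))
    rw [h2]
    exact Submodule.smul_mem _ _ (stdWedge_mem_span n ν r)
  obtain ⟨y, hy, hyx⟩ := hle hx'
  have : (⟨x, hx⟩ : ⋀[ℝ]^ν (Fin n → ℝ)) = y := Subtype.ext hyx.symm
  rw [this]
  exact hy

lemma li_w : LinearIndependent ℝ (w n ν) := by
  rw [Fintype.linearIndependent_iff]
  intro g hg t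
  have := congrArg (coordL n ν t) hg
  rw [map_sum, map_zero] at this
  simp only [map_smul, coordL_w, smul_eq_mul, mul_ite, mul_one, mul_zero] at this
  rwa [Finset.sum_ite_eq (Finset.univ) t g, if_pos (Finset.mem_univ t)] at this

noncomputable def wBasis : Module.Basis (Idx n ν) ℝ (⋀[ℝ]^ν (Fin n → ℝ)) :=
  Module.Basis.mk (li_w n ν) (by rw [span_w_top n ν])

lemma wBasis_apply (s : Idx n ν) : wBasis n ν s = w n ν s := Module.Basis.mk_apply _ _ s

lemma repr_eq_coordL (t : Idx n ν) (x : ⋀[ℝ]^ν (Fin n → ℝ)) :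
    (wBasis n ν).repr x t = coordL n ν t x := by
  have h : ((Finsupp.lapply t : (Idx n ν →₀ ℝ) →ₗ[ℝ] ℝ).comp
      ((wBasis n ν).repr.toLinearMap)) = coordL n ν t := by
    apply Module.Basis.ext (wBasis n ν)
    intro s
    rw [LinearMap.comp_apply, LinearEquiv.coe_toLinearMap, Module.Basis.repr_self,
      Finsupp.lapply_apply, Finsupp.single_apply, wBasis_apply, coordL_w]
    exact if_congr eq_comm rfl rfl
  exact LinearMap.congr_fun h x
lemma coordL_AnuVal (R : Fin n → Fin n → Fin n → Fin n → ℝ)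
    (hskew₁ : ∀ i j k l, R i j k l = - R j i k l) (s : Idx n ν) :
    coordL n ν s (AnuVal n ν R (incl n ν s)) =
      (∑ a : Fin ν, ricci n R (incl n ν s a) (incl n ν s a)) +
        2 * ∑ a : Fin ν, ∑ b : Fin ν,
          (if a < b then
            R (incl n ν s a) (incl n ν s b) (incl n ν s b) (incl n ν s a) else 0) := by
  set ι := incl n ν s with hι
  have hinj := incl_inj n ν s
  rw [AnuVal, map_sub, map_smul, map_sum, map_sum]
  have T1 : ∀ a : Fin ν, coordL n ν s (∑ p : Fin n,
      ricci n R (ι a) p • stdWedge n ν (Function.update ι a p)) = ricci n R (ι a) (ι a) := by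
    intro a
    rw [map_sum]
    simp only [map_smul, coordL_stdWedge_E, smul_eq_mul]
    simp only [← hι, E_update (ι := ι) hinj, mul_ite, mul_one, mul_zero]
    rw [Finset.sum_ite_eq' Finset.univ (ι a) (fun p => ricci n R (ι a) p),
      if_pos (Finset.mem_univ _)]
  have T2 : ∀ a b : Fin ν, a < b → coordL n ν s
      (∑ p : Fin n, ∑ q : Fin n, R (ι a) p (ι b) q •
        stdWedge n ν (Function.update (Function.update ι a p) b q)) =
      - R (ι a) (ι b) (ι b) (ι a) := by
    intro a b hab
    have hne : a ≠ b := ne_of_lt hab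
    rw [map_sum]
    have hsplit : ∀ p q : Fin n,
        (if p = ι a ∧ q = ι b then (1:ℝ) else if p = ι b ∧ q = ι a then -1 else 0) =
        (if p = ι a then if q = ι b then (1:ℝ) else 0 else 0) +
        (if p = ι b then if q = ι a then (-1:ℝ) else 0 else 0) := by
      intro p q
      have hii : ι a ≠ ι b := fun h => hne (hinj h)
      by_cases h1 : p = ι a
      · by_cases h3 : q = ι b <;> simp [h1, h3, hii, Ne.symm hii]
      · by_cases h2 : p = ι b
        · by_cases h3 : q = ι a <;> simp [h1, h2, h3, hii, Ne.symm hii]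
        · simp [h1, h2]
    calc (∑ p : Fin n, coordL n ν s (∑ q : Fin n, R (ι a) p (ι b) q •
            stdWedge n ν (Function.update (Function.update ι a p) b q)))
        = ∑ p : Fin n, ∑ q : Fin n, R (ι a) p (ι b) q *
            ((if p = ι a then if q = ι b then (1:ℝ) else 0 else 0) +
             (if p = ι b then if q = ι a then (-1:ℝ) else 0 else 0)) := by
          refine Finset.sum_congr rfl fun p _ => ?_
          rw [map_sum]
          refine Finset.sum_congr rfl fun q _ => ?_
          rw [map_smul, coordL_stdWedge_E, smul_eq_mul, E_update2 hinj hne, hsplit]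
      _ = - R (ι a) (ι b) (ι b) (ι a) := by
          simp only [mul_add, Finset.sum_add_distrib, mul_ite, mul_one, mul_zero, mul_neg]
          rw [Finset.sum_comm (f := fun p q => if p = ι a then if q = ι b then
            R (ι a) p (ι b) q else 0 else 0)]
          simp only [Finset.sum_ite_eq' Finset.univ, Finset.mem_univ, if_true]
          have hz : R (ι a) (ι a) (ι b) (ι b) = 0 := by
            have := hskew₁ (ι a) (ι a) (ι b) (ι b)
            linarith
          rw [hz]
          ring_nf
          rw [Finset.sum_comm (f := fun p q => if p = ι b then if q = ι a then
            -R (ι a) p (ι b) q else 0 else 0)]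
          simp only [Finset.sum_ite_eq' Finset.univ, Finset.mem_univ, if_true]
  rw [Finset.sum_congr rfl (fun a _ => T1 a)]
  have T3 : ∀ a : Fin ν, coordL n ν s (∑ b : Fin ν,
      if a < b then
        ∑ p : Fin n, ∑ q : Fin n, R (ι a) p (ι b) q •
          stdWedge n ν (Function.update (Function.update ι a p) b q)
      else 0) = ∑ b : Fin ν, (if a < b then - R (ι a) (ι b) (ι b) (ι a) else 0) := by
    intro a
    rw [map_sum]
    refine Finset.sum_congr rfl fun b _ => ?_
    rw [apply_ite (coordL n ν s), map_zero]
    by_cases hab : a < b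
    · rw [if_pos hab, if_pos hab, T2 a b hab]
    · rw [if_neg hab, if_neg hab]
  rw [Finset.sum_congr rfl (fun a _ => T3 a)]
  have harith : ∀ a b : Fin ν, (if a < b then -R (ι a) (ι b) (ι b) (ι a) else 0) =
      -(if a < b then R (ι a) (ι b) (ι b) (ι a) else 0) := fun a b => by
    by_cases h : a < b <;> simp [h]
  simp only [harith, Finset.sum_neg_distrib, smul_eq_mul, mul_neg, sub_neg_eq_add]

lemma trace_eq_sum_coordL (A : ⋀[ℝ]^ν (Fin n → ℝ) →ₗ[ℝ] ⋀[ℝ]^ν (Fin n → ℝ)) :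
    LinearMap.trace ℝ _ A = ∑ s : Idx n ν, coordL n ν s (A (w n ν s)) := by
  rw [LinearMap.trace_eq_matrix_trace ℝ (wBasis n ν) A, Matrix.trace]
  refine Finset.sum_congr rfl fun s _ => ?_
  rw [Matrix.diag_apply, LinearMap.toMatrix_apply, repr_eq_coordL, wBasis_apply]

lemma sum_incl (g : Fin n → ℝ) (s : Idx n ν) :
    ∑ a : Fin ν, g (incl n ν s a) = ∑ i ∈ s.1, g i := by
  rw [← Finset.sum_coe_sort s.1 g]
  exact Fintype.sum_equiv (s.1.orderIsoOfFin s.2).toEquiv _ _ (fun a => rfl)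

lemma count_general (u : Finset (Fin n)) (hu : u.card ≤ ν) :
    (Finset.univ.filter (fun s : Idx n ν => u ⊆ s.1)).card
      = (n - u.card).choose (ν - u.card) := by
  have hcard : (Finset.univ \ u).card = n - u.card := by
    rw [Finset.card_sdiff_of_subset (Finset.subset_univ u), Finset.card_univ, Fintype.card_fin]
  rw [← hcard, ← Finset.card_powersetCard (ν - u.card) (Finset.univ \ u)]
  refine Finset.card_bij' (fun s _ => s.1 \ u)
    (fun v hv => ⟨v ∪ u, ?_⟩) ?_ ?_ ?_ ?_
  · obtain ⟨hsub, hc⟩ := Finset.mem_powersetCard.mp hv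
    have hdisj : Disjoint v u := by
      rw [Finset.disjoint_left]
      intro x hxv hxu
      exact (Finset.mem_sdiff.mp (hsub hxv)).2 hxu
    rw [Finset.card_union_of_disjoint hdisj, hc]
    omega
  · intro s hs
    have husub : u ⊆ s.1 := (Finset.mem_filter.mp hs).2
    rw [Finset.mem_powersetCard]
    constructor
    · intro x hx
      rw [Finset.mem_sdiff] at hx ⊢
      exact ⟨Finset.mem_univ x, hx.2⟩
    · rw [Finset.card_sdiff_of_subset husub, s.2]
  · intro v hv
    rw [Finset.mem_filter]
    exact ⟨Finset.mem_univ _, Finset.subset_union_right⟩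
  · intro s hs
    have husub : u ⊆ s.1 := (Finset.mem_filter.mp hs).2
    exact Subtype.ext (Finset.sdiff_union_of_subset husub)
  · intro v hv
    obtain ⟨hsub, hc⟩ := Finset.mem_powersetCard.mp hv
    have hdisj : Disjoint v u := by
      rw [Finset.disjoint_left]
      intro x hxv hxu
      exact (Finset.mem_sdiff.mp (hsub hxv)).2 hxu
    exact Finset.union_sdiff_cancel_right hdisj

lemma sum_over_idx_single (g : Fin n → ℝ) (hν : 1 ≤ ν) :
    ∑ s : Idx n ν, ∑ i ∈ s.1, g i = ((n-1).choose (ν-1) : ℝ) * ∑ i : Fin n, g i := by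
  have h1 : ∀ s : Idx n ν, ∑ i ∈ s.1, g i = ∑ i : Fin n, if i ∈ s.1 then g i else 0 := by
    intro s
    rw [Finset.sum_ite_mem, Finset.univ_inter]
  rw [Finset.sum_congr rfl fun s _ => h1 s, Finset.sum_comm]
  rw [Finset.mul_sum]
  refine Finset.sum_congr rfl fun i _ => ?_
  rw [← Finset.sum_filter, Finset.sum_const]
  have hfe : (Finset.univ.filter (fun s : Idx n ν => i ∈ s.1)) =
      (Finset.univ.filter (fun s : Idx n ν => {i} ⊆ s.1)) := by
    refine Finset.filter_congr fun s _ => ?_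
    rw [Finset.singleton_subset_iff]
  rw [hfe, count_general n ν {i} (by rwa [Finset.card_singleton]), Finset.card_singleton]
  rw [nsmul_eq_mul]

lemma sum_over_idx_pair (F : Fin n → Fin n → ℝ) (hd : ∀ i, F i i = 0) (hν : 2 ≤ ν) :
    ∑ s : Idx n ν, ∑ i ∈ s.1, ∑ j ∈ s.1, F i j
      = ((n-2).choose (ν-2) : ℝ) * ∑ i : Fin n, ∑ j : Fin n, F i j := by
  have h1 : ∀ s : Idx n ν, ∑ i ∈ s.1, ∑ j ∈ s.1, F i j
      = ∑ i : Fin n, ∑ j : Fin n, if i ∈ s.1 ∧ j ∈ s.1 then F i j else 0 := by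
    intro s
    symm
    have inner : ∀ i, (∑ j : Fin n, if i ∈ s.1 ∧ j ∈ s.1 then F i j else 0)
        = if i ∈ s.1 then ∑ j ∈ s.1, F i j else 0 := by
      intro i
      by_cases hi : i ∈ s.1
      · rw [if_pos hi]
        simp only [hi, true_and]
        rw [Finset.sum_ite_mem, Finset.univ_inter]
      · simp [hi]
    rw [Finset.sum_congr rfl fun i _ => inner i, Finset.sum_ite_mem, Finset.univ_inter]
  rw [Finset.sum_congr rfl fun s _ => h1 s, Finset.sum_comm, Finset.mul_sum]
  refine Finset.sum_congr rfl fun i _ => ?_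
  rw [Finset.sum_comm, Finset.mul_sum]
  refine Finset.sum_congr rfl fun j _ => ?_
  by_cases hij : i = j
  · subst hij
    rw [hd i]
    simp
  · rw [← Finset.sum_filter, Finset.sum_const]
    have hfe : (Finset.univ.filter (fun s : Idx n ν => i ∈ s.1 ∧ j ∈ s.1)) =
        (Finset.univ.filter (fun s : Idx n ν => {i, j} ⊆ s.1)) := by
      refine Finset.filter_congr fun s _ => ?_
      rw [Finset.insert_subset_iff, Finset.singleton_subset_iff]
    have hc2 : ({i, j} : Finset (Fin n)).card = 2 := Finset.card_pair hij
    rw [hfe, count_general n ν {i, j} (by rwa [hc2]), hc2, nsmul_eq_mul]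

lemma pair_sum_eq_neg_scalar (R : Fin n → Fin n → Fin n → Fin n → ℝ)
    (hskew₁ : ∀ i j k l, R i j k l = - R j i k l)
    (hskew₂ : ∀ i j k l, R i j k l = - R i j l k)
    (hpair : ∀ i j k l, R i j k l = R k l i j) :
    2 * (∑ i : Fin n, ∑ j : Fin n, if i < j then R i j j i else 0) = - scalarCurv n R := by
  have hdiag : ∀ i : Fin n, R i i i i = 0 := fun i => by
    have := hskew₁ i i i i
    linarith
  have hswap : (∑ i : Fin n, ∑ j : Fin n, if i < j then R i j j i else 0)
      = ∑ i : Fin n, ∑ j : Fin n, if j < i then R i j j i else 0 := by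
    rw [Finset.sum_comm]
    refine Finset.sum_congr rfl fun j _ => Finset.sum_congr rfl fun i _ => ?_
    by_cases h : i < j
    · rw [if_pos h, if_pos h, hpair]
    · rw [if_neg h, if_neg h]
  have hfull : (∑ i : Fin n, ∑ j : Fin n, if i < j then R i j j i else 0)
      + (∑ i : Fin n, ∑ j : Fin n, if j < i then R i j j i else 0)
      = ∑ i : Fin n, ∑ j : Fin n, R i j j i := by
    rw [← Finset.sum_add_distrib]
    refine Finset.sum_congr rfl fun i _ => ?_
    rw [← Finset.sum_add_distrib]
    refine Finset.sum_congr rfl fun j _ => ?_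
    rcases lt_trichotomy i j with h | h | h
    · rw [if_pos h, if_neg (asymm h), add_zero]
    · subst h
      simp [hdiag i]
    · rw [if_neg (asymm h), if_pos h, zero_add]
  have hS : (∑ i : Fin n, ∑ j : Fin n, R i j j i) = - scalarCurv n R := by
    rw [scalarCurv, ← Finset.sum_neg_distrib]
    refine Finset.sum_congr rfl fun i _ => ?_
    rw [ricci, ← Finset.sum_neg_distrib]
    refine Finset.sum_congr rfl fun j _ => ?_
    have := hskew₂ i j j i
    linarith
  rw [two_mul]
  nth_rewrite 2 [hswap]
  rw [hfull, hS]

lemma chooseZ_eq {n ν : ℕ} (hn : 2 ≤ n) (hν : 1 ≤ ν) :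
    chooseZ ((n:ℤ) - 2) ((ν:ℤ) - 1) = ((n-2).choose (ν-1) : ℤ) := by
  rw [chooseZ]
  by_cases h : (ν:ℤ) - 1 ≤ (n:ℤ) - 2
  · rw [if_pos ⟨by omega, by omega, h⟩]
    have h1 : ((n:ℤ)-2).toNat = n-2 := by omega
    have h2 : ((ν:ℤ)-1).toNat = ν-1 := by omega
    rw [h1, h2]
  · rw [if_neg (by tauto)]
    rw [Nat.choose_eq_zero_of_lt (by omega)]
    simp

lemma per_s_pair (R : Fin n → Fin n → Fin n → Fin n → ℝ) (s : Idx n ν) :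
    ∑ a : Fin ν, ∑ b : Fin ν,
        (if a < b then R (incl n ν s a) (incl n ν s b) (incl n ν s b) (incl n ν s a) else 0)
      = ∑ i ∈ s.1, ∑ j ∈ s.1, (if i < j then R i j j i else 0) := by
  have hlt := incl_strictMono n ν s
  have step1 : ∀ a b : Fin ν,
      (if a < b then R (incl n ν s a) (incl n ν s b) (incl n ν s b) (incl n ν s a) else 0)
      = (if incl n ν s a < incl n ν s b then
          R (incl n ν s a) (incl n ν s b) (incl n ν s b) (incl n ν s a) else 0) := by
    intro a b
    by_cases h : a < b
    · rw [if_pos h, if_pos (hlt h)]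
    · rw [if_neg h, if_neg (fun h' => h (hlt.lt_iff_lt.mp h'))]
  refine (Finset.sum_congr rfl fun a _ => Finset.sum_congr rfl fun b _ => step1 a b).trans ?_
  refine (sum_incl n ν (fun i => ∑ b : Fin ν,
      if i < incl n ν s b then R i (incl n ν s b) (incl n ν s b) i else 0) s).trans ?_
  refine Finset.sum_congr rfl fun i _ => ?_
  exact sum_incl n ν (fun j => if i < j then R i j j i else 0) s


end Aux

/-- Formula (7.6) of the paper: `Tr A_ν = C(n-2, ν-1) · S`. -/
theorem trace_Anu (n ν : ℕ) (hn : 1 ≤ n) (hν : ν ≤ n)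
    (R : Fin n → Fin n → Fin n → Fin n → ℝ)
    (hskew₁ : ∀ i j k l, R i j k l = - R j i k l)
    (hskew₂ : ∀ i j k l, R i j k l = - R i j l k)
    (hpair : ∀ i j k l, R i j k l = R k l i j)
    (hbianchi : ∀ i j k l, R i j k l + R i k l j + R i l j k = 0)
    (A : ⋀[ℝ]^ν (Fin n → ℝ) →ₗ[ℝ] ⋀[ℝ]^ν (Fin n → ℝ))
    (hA : ∀ ι : Fin ν → Fin n, A (stdWedge n ν ι) = AnuVal n ν R ι) :
    LinearMap.trace ℝ _ A = (chooseZ ((n : ℤ) - 2) ((ν : ℤ) - 1) : ℝ) * scalarCurv n R := by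
  have htr : LinearMap.trace ℝ _ A =
      (∑ s : Idx n ν, ∑ i ∈ s.1, ricci n R i i) +
      2 * ∑ s : Idx n ν, ∑ i ∈ s.1, ∑ j ∈ s.1, (if i < j then R i j j i else 0) := by
    rw [trace_eq_sum_coordL n ν A]
    have hAs : ∀ s : Idx n ν, coordL n ν s (A (w n ν s)) =
        (∑ i ∈ s.1, ricci n R i i) +
        2 * ∑ i ∈ s.1, ∑ j ∈ s.1, (if i < j then R i j j i else 0) := by
      intro s
      rw [show A (w n ν s) = AnuVal n ν R (incl n ν s) from hA (incl n ν s),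
        coordL_AnuVal n ν R hskew₁ s, sum_incl n ν (fun i => ricci n R i i) s,
        per_s_pair n ν R s]
    rw [Finset.sum_congr rfl fun s _ => hAs s, Finset.sum_add_distrib, ← Finset.mul_sum]
  rcases Nat.eq_zero_or_pos ν with hν0 | hν1
  · subst hν0
    have hz : ∀ s : Idx n 0, s.1 = ∅ := fun s => Finset.card_eq_zero.mp s.2
    rw [htr]
    have h1 : (∑ s : Idx n 0, ∑ i ∈ s.1, ricci n R i i) = 0 :=
      Finset.sum_eq_zero fun s _ => by rw [hz s]; simp
    have h2 : (∑ s : Idx n 0, ∑ i ∈ s.1, ∑ j ∈ s.1, (if i < j then R i j j i else 0)) = 0 :=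
      Finset.sum_eq_zero fun s _ => by rw [hz s]; simp
    rw [h1, h2]
    have hz0 : chooseZ ((n : ℤ) - 2) (((0:ℕ) : ℤ) - 1) = 0 := by
      rw [chooseZ, if_neg (by omega)]
    rw [hz0]
    norm_num
  · -- 1 ≤ ν
    have hC1 : (∑ s : Idx n ν, ∑ i ∈ s.1, ricci n R i i)
        = ((n-1).choose (ν-1) : ℝ) * scalarCurv n R := by
      rw [sum_over_idx_single n ν (fun i => ricci n R i i) hν1, scalarCurv]
    rcases Nat.lt_or_ge ν 2 with hν2 | hν2
    · -- ν = 1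
      have hν1' : ν = 1 := by omega
      subst hν1'
      have hpz : ∀ s : Idx n 1, ∑ i ∈ s.1, ∑ j ∈ s.1, (if i < j then R i j j i else 0) = 0 := by
        intro s
        obtain ⟨x, hx⟩ := Finset.card_eq_one.mp s.2
        rw [hx]
        simp
      rw [htr, Finset.sum_congr rfl fun s _ => hpz s, Finset.sum_const, hC1]
      simp only [smul_zero, mul_zero, add_zero]
      rcases Nat.lt_or_ge n 2 with hn2 | hn2
      · have hn1 : n = 1 := by omega
        subst hn1
        have hS : scalarCurv 1 R = 0 := by
          rw [scalarCurv]
          have : ricci 1 R 0 0 = 0 := by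
            rw [ricci]
            have := hskew₁ 0 0 0 0
            simp only [Finset.univ_unique, Finset.sum_singleton]
            have h00 : (default : Fin 1) = 0 := rfl
            rw [h00]
            linarith
          simp [Finset.sum_congr rfl fun i _ => (by rw [Subsingleton.elim i 0]; exact this :
            ricci 1 R i i = 0)]
        rw [hS]
        ring
      · rw [chooseZ_eq hn2 (le_refl 1)]
        norm_num
    · -- 2 ≤ ν, hence 2 ≤ n
      have hn2 : 2 ≤ n := le_trans hν2 hν
      have hC2 : (∑ s : Idx n ν, ∑ i ∈ s.1, ∑ j ∈ s.1, (if i < j then R i j j i else 0))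
          = ((n-2).choose (ν-2) : ℝ) * ∑ i : Fin n, ∑ j : Fin n, (if i < j then R i j j i else 0) := by
        exact sum_over_idx_pair n ν _ (fun i => by simp) hν2
      rw [htr, hC1, hC2, chooseZ_eq hn2 hν1]
      have hps := pair_sum_eq_neg_scalar n R hskew₁ hskew₂ hpair
      have hpascal : ((n-1).choose (ν-1) : ℝ)
          = ((n-2).choose (ν-2) : ℝ) + ((n-2).choose (ν-1) : ℝ) := by
        have h1 : n - 1 = (n - 2) + 1 := by omega
        have h2 : ν - 1 = (ν - 2) + 1 := by omega
        rw [h1, h2, Nat.choose_succ_succ]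
        push_cast
        ring
      have hps2 : ((n-2).choose (ν-2) : ℝ) *
          (2 * ∑ i : Fin n, ∑ j : Fin n, (if i < j then R i j j i else 0)) =
          ((n-2).choose (ν-2) : ℝ) * (- scalarCurv n R) := by rw [hps]
      have hp2 : ((n-1).choose (ν-1) : ℝ) * scalarCurv n R =
          (((n-2).choose (ν-2) : ℝ) + ((n-2).choose (ν-1) : ℝ)) * scalarCurv n R := by
        rw [hpascal]
      push_cast
      nlinarith [hps2, hp2]
end

section
/- Let R_{ijkl} be an algebraic curvature tensor on ℝ^n and let 0 ≤ ν ≤ n. Define, for each pair 1 ≤ i,j ≤ n, the endomorphism 𝓡^ν_{ij} of Λ^ν(ℝ^n) by 𝓡^ν_{ij} = −∑_{a=1}^ν 𝓡^{ν,a}_{ij}, where 𝓡^{ν,a}_{ij}(e_{i_1}∧⋯∧e_{i_ν}) = ∑_{p=1}^n R_{i_a p i j}·(e_{i_1}∧⋯∧e_{i_ν} with e_{i_a} replaced by e_p). Then ∑_{i,j=1}^n Tr(𝓡^ν_{ij} ∘ 𝓡^ν_{ij}) = −C(n−2, ν−1)·|R|². -/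
open ExteriorAlgebra

namespace TCF
variable (n ν : ℕ)
abbrev Idx := {s : Finset (Fin n) // s.card = ν}
noncomputable def mmap (s : Idx n ν) : Fin ν → Fin n := fun a => (s.1.orderIsoOfFin s.2 a : Fin n)
lemma mmap_mem (s : Idx n ν) (a : Fin ν) : mmap n ν s a ∈ s.1 := (s.1.orderIsoOfFin s.2 a).2
lemma mmap_inj (s : Idx n ν) : Function.Injective (mmap n ν s) := by
  intro a b h; exact (s.1.orderIsoOfFin s.2).injective (Subtype.ext h)
lemma mmap_surj (s : Idx n ν) {k : Fin n} (hk : k ∈ s.1) : ∃ a, mmap n ν s a = k :=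
  ⟨(s.1.orderIsoOfFin s.2).symm ⟨k, hk⟩, by simp [mmap]⟩
noncomputable def φ (s : Idx n ν) : (Fin n → ℝ) [⋀^Fin ν]→ₗ[ℝ] ℝ :=
  (Matrix.detRowAlternating).compLinearMap (LinearMap.funLeft ℝ ℝ (mmap n ν s))
noncomputable def ℓ (s : Idx n ν) : ⋀[ℝ]^ν (Fin n → ℝ) →ₗ[ℝ] ℝ :=
  (ExteriorAlgebra.liftAlternating (Function.update 0 ν (φ n ν s))).comp
    (Submodule.subtype _)
lemma ℓ_stdWedge (s : Idx n ν) (ι : Fin ν → Fin n) :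
    ℓ n ν s (stdWedge n ν ι) =
      Matrix.det (Matrix.of fun a b => if mmap n ν s b = ι a then (1:ℝ) else 0) := by
  have : ℓ n ν s (stdWedge n ν ι) = φ n ν s (fun a => Pi.single (ι a) (1:ℝ)) := by
    simp [ℓ, stdWedge, ExteriorAlgebra.liftAlternating_apply_ιMulti]
  rw [this]
  simp only [φ, AlternatingMap.compLinearMap_apply, Matrix.detRowAlternating]
  congr 1
  ext a b
  simp [LinearMap.funLeft, Pi.single_apply]

lemma E0 (s : Idx n ν) (ι : Fin ν → Fin n) (a : Fin ν) (h : ι a ∉ s.1) :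
    ℓ n ν s (stdWedge n ν ι) = 0 := by
  rw [ℓ_stdWedge]
  apply Matrix.det_eq_zero_of_row_eq_zero a
  intro b
  simp only [Matrix.of_apply, ite_eq_right_iff]
  intro hb
  exact absurd (hb ▸ mmap_mem n ν s b) h

lemma E1 (s : Idx n ν) (ι : Fin ν → Fin n) (h : ¬ Function.Injective ι) :
    ℓ n ν s (stdWedge n ν ι) = 0 := by
  rw [ℓ_stdWedge]
  simp only [Function.Injective, not_forall] at h
  obtain ⟨a, b, hab, hne⟩ := h
  apply Matrix.det_zero_of_row_eq hne
  ext c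
  simp [hab]

lemma E2 (s : Idx n ν) : ℓ n ν s (stdWedge n ν (mmap n ν s)) = 1 := by
  rw [ℓ_stdWedge]
  have : (Matrix.of fun a b => if mmap n ν s b = mmap n ν s a then (1:ℝ) else 0) = 1 := by
    ext a b
    simp [Matrix.one_apply, (mmap_inj n ν s).eq_iff, eq_comm]
  rw [this, Matrix.det_one]

lemma E3 (s : Idx n ν) (a b : Fin ν) (hab : a ≠ b) :
    ℓ n ν s (stdWedge n ν (mmap n ν s ∘ Equiv.swap a b)) = -1 := by
  rw [ℓ_stdWedge]
  have : (Matrix.of fun c d => if mmap n ν s d = (mmap n ν s ∘ Equiv.swap a b) c then (1:ℝ) else 0)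
      = (Equiv.swap a b).permMatrix ℝ := by
    ext c d
    simp [Equiv.Perm.permMatrix, PEquiv.toMatrix_apply, Equiv.toPEquiv_apply,
      (mmap_inj n ν s).eq_iff, Option.mem_def, eq_comm]
  rw [this, Matrix.det_permutation, Equiv.Perm.sign_swap hab]
  simp

lemma iMulti_expand (v : Fin ν → (Fin n → ℝ)) :
    ExteriorAlgebra.ιMulti ℝ ν v =
      ∑ ι : Fin ν → Fin n, (∏ a, v a (ι a)) •
        ExteriorAlgebra.ιMulti ℝ ν (fun a => Pi.single (ι a) (1 : ℝ)) := by
  have hv : v = fun a => ∑ k : Fin n, (v a k) • (Pi.single k 1 : Fin n → ℝ) := by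
    funext a
    rw [← Finset.univ_sum_single (v a)]
    congr 1; funext k
    rw [Finset.univ_sum_single]
    ext j; simp [Pi.single_apply]
  conv_lhs => rw [hv]
  rw [show (ExteriorAlgebra.ιMulti ℝ ν (M := Fin n → ℝ))
      (fun a => ∑ k : Fin n, (v a k) • (Pi.single k 1 : Fin n → ℝ)) =
      (ExteriorAlgebra.ιMulti ℝ ν (M := Fin n → ℝ)).toMultilinearMap
      (fun a => ∑ k : Fin n, (v a k) • (Pi.single k 1 : Fin n → ℝ)) from rfl,
    MultilinearMap.map_sum]
  apply Finset.sum_congr rfl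
  intro ι _
  rw [MultilinearMap.map_smul_univ]
  rfl

lemma stdWedge_span :
    Submodule.span ℝ (Set.range (stdWedge n ν)) = (⊤ : Submodule ℝ (⋀[ℝ]^ν (Fin n → ℝ))) := by
  apply Submodule.map_injective_of_injective (Submodule.injective_subtype (⋀[ℝ]^ν (Fin n → ℝ)))
  rw [Submodule.map_subtype_top, Submodule.map_span]
  apply le_antisymm
  · rw [Submodule.span_le]
    rintro x ⟨y, ⟨ι, rfl⟩, rfl⟩
    exact (stdWedge n ν ι).2
  · refine le_trans (le_of_eq (ExteriorAlgebra.ιMulti_span_fixedDegree ℝ ν).symm) ?_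
    rw [Submodule.span_le]
    rintro x ⟨v, rfl⟩
    rw [iMulti_expand]
    apply Submodule.sum_mem
    intro ι _
    apply Submodule.smul_mem
    apply Submodule.subset_span
    exact ⟨stdWedge n ν ι, ⟨ι, rfl⟩, rfl⟩

lemma ℓ_basisWedge (s t : Idx n ν) :
    ℓ n ν t (stdWedge n ν (mmap n ν s)) = if s = t then 1 else 0 := by
  rcases eq_or_ne s t with rfl | hst
  · simp [E2]
  · rw [if_neg hst]
    have hsub : ¬ s.1 ⊆ t.1 := by
      intro h
      exact hst (Subtype.ext (Finset.eq_of_subset_of_card_le h (by rw [s.2, t.2])))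
    obtain ⟨k, hks, hkt⟩ := Finset.not_subset.mp hsub
    obtain ⟨a, ha⟩ := mmap_surj n ν s hks
    exact E0 n ν t _ a (ha ▸ hkt)

/-- wedges in span of sorted wedges -/
lemma stdWedge_mem_span (ι : Fin ν → Fin n) :
    stdWedge n ν ι ∈ Submodule.span ℝ (Set.range (fun s : Idx n ν => stdWedge n ν (mmap n ν s))) := by
  by_cases hinj : Function.Injective ι
  · -- ι = mmap t ∘ σ for some permutation σ
    set t : Idx n ν := ⟨Finset.image ι Finset.univ, by
      rw [Finset.card_image_of_injective _ hinj, Finset.card_univ, Fintype.card_fin]⟩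
    have hmem : ∀ a, ι a ∈ t.1 := fun a => Finset.mem_image_of_mem ι (Finset.mem_univ a)
    set f : Fin ν → Fin ν := fun a => (t.1.orderIsoOfFin t.2).symm ⟨ι a, hmem a⟩ with hf
    have hfinj : Function.Injective f := by
      intro a b hab
      apply hinj
      have h2 := congrArg (fun c => ((t.1.orderIsoOfFin t.2) c : Fin n)) hab
      simpa only [hf, OrderIso.apply_symm_apply] using h2
    have hcomp : ∀ a, mmap n ν t (f a) = ι a := by
      intro a
      simp [mmap, hf]
    have key : stdWedge n ν ι = Equiv.Perm.sign (Equiv.ofBijective f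
        (Finite.injective_iff_bijective.mp hfinj)) • stdWedge n ν (mmap n ν t) := by
      set σ := Equiv.ofBijective f (Finite.injective_iff_bijective.mp hfinj)
      apply Subtype.ext
      have : (fun a => Pi.single (ι a) (1:ℝ)) = (fun a => Pi.single (mmap n ν t a) (1:ℝ)) ∘ σ := by
        funext a
        simp [Function.comp, σ, Equiv.ofBijective_apply, hcomp]
      rw [show ((stdWedge n ν ι : ⋀[ℝ]^ν (Fin n → ℝ)) : ExteriorAlgebra ℝ (Fin n → ℝ)) =
        ExteriorAlgebra.ιMulti ℝ ν (fun a => Pi.single (ι a) (1:ℝ)) from rfl, this]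
      rw [AlternatingMap.map_perm]
      rfl
    rw [key]
    exact Submodule.smul_mem _ _ (Submodule.subset_span (Set.mem_range_self t))
  · have : stdWedge n ν ι = 0 := by
      simp only [Function.Injective, not_forall] at hinj
      obtain ⟨a, b, hab, hne⟩ := hinj
      have h0 : ExteriorAlgebra.ιMulti ℝ ν (fun a => (Pi.single (ι a) 1 : Fin n → ℝ)) = 0 := by
        apply AlternatingMap.map_eq_zero_of_eq (ExteriorAlgebra.ιMulti ℝ ν) _ ?_ hne
        exact congrArg (fun k => (Pi.single k 1 : Fin n → ℝ)) hab
      exact Subtype.ext (by rw [ZeroMemClass.coe_zero]; exact h0)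
    rw [this]
    exact Submodule.zero_mem _

noncomputable def bas : Module.Basis (Idx n ν) ℝ (⋀[ℝ]^ν (Fin n → ℝ)) := by
  apply Module.Basis.mk (v := fun s : Idx n ν => stdWedge n ν (mmap n ν s))
  · rw [Fintype.linearIndependent_iff]
    intro g hg t
    have := congrArg (ℓ n ν t) hg
    rw [map_sum, map_zero] at this
    simpa [ℓ_basisWedge] using this
  · rw [← stdWedge_span n ν]
    apply Submodule.span_le.mpr
    rintro x ⟨ι, rfl⟩
    exact SetLike.mem_coe.mpr (stdWedge_mem_span n ν ι)

lemma bas_apply (s : Idx n ν) : bas n ν s = stdWedge n ν (mmap n ν s) := by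
  simp [bas]

lemma repr_eq_ℓ (x : ⋀[ℝ]^ν (Fin n → ℝ)) (s : Idx n ν) :
    (bas n ν).repr x s = ℓ n ν s x := by
  have : (Finsupp.lapply s).comp ((bas n ν).repr : _ →ₗ[ℝ] _) = ℓ n ν s := by
    apply Module.Basis.ext (bas n ν)
    intro t
    simp only [LinearMap.comp_apply, Finsupp.lapply_apply, LinearEquiv.coe_coe,
      Module.Basis.repr_self]
    rw [bas_apply, ℓ_basisWedge, Finsupp.single_apply]
  exact LinearMap.congr_fun this x

lemma trace_eq (f : ⋀[ℝ]^ν (Fin n → ℝ) →ₗ[ℝ] ⋀[ℝ]^ν (Fin n → ℝ)) :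
    LinearMap.trace ℝ _ f = ∑ s : Idx n ν, ℓ n ν s (f (stdWedge n ν (mmap n ν s))) := by
  rw [LinearMap.trace_eq_matrix_trace ℝ (bas n ν), Matrix.trace]
  apply Finset.sum_congr rfl
  intro s _
  rw [Matrix.diag_apply, LinearMap.toMatrix_apply, repr_eq_ℓ, bas_apply]

lemma U1 (s : Idx n ν) (a : Fin ν) (q : Fin n) :
    ℓ n ν s (stdWedge n ν (Function.update (mmap n ν s) a q)) =
      if q = mmap n ν s a then 1 else 0 := by
  set I := mmap n ν s with hI
  rcases eq_or_ne q (I a) with rfl | hq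
  · rw [if_pos rfl, Function.update_eq_self, E2]
  · rw [if_neg hq]
    by_cases hqs : q ∈ s.1
    · obtain ⟨c, hc⟩ := mmap_surj n ν s hqs
      have hca : c ≠ a := by rintro rfl; exact hq hc.symm
      apply E1
      intro hinj
      have : Function.update I a q a = Function.update I a q c := by
        rw [Function.update_self, Function.update_of_ne hca]
        exact hc.symm
      exact hca (hinj this).symm
    · exact E0 n ν s _ a (by rwa [Function.update_self])

lemma U2 (s : Idx n ν) (a b : Fin ν) (hab : a ≠ b) (p q : Fin n) :
    ℓ n ν s (stdWedge n ν (Function.update (Function.update (mmap n ν s) a p) b q)) =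
      if p = mmap n ν s a then (if q = mmap n ν s b then 1 else 0)
      else if p = mmap n ν s b then (if q = mmap n ν s a then -1 else 0) else 0 := by
  set I := mmap n ν s with hI
  set J := Function.update (Function.update I a p) b q with hJ
  have hJa : J a = p := by rw [hJ, Function.update_of_ne hab, Function.update_self]
  have hJb : J b = q := by rw [hJ, Function.update_self]
  have hJc : ∀ c, c ≠ a → c ≠ b → J c = I c := by
    intro c hca hcb
    rw [hJ, Function.update_of_ne hcb, Function.update_of_ne hca]
  rcases eq_or_ne p (I a) with rfl | hpa
  · rw [if_pos rfl]
    have : J = Function.update I b q := by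
      rw [hJ, Function.update_eq_self]
    rw [this, U1]
  · rw [if_neg hpa]
    rcases eq_or_ne p (I b) with rfl | hpb
    · rw [if_pos rfl]
      rcases eq_or_ne q (I a) with rfl | hqa
      · rw [if_pos rfl]
        have : J = I ∘ Equiv.swap a b := by
          funext c
          rcases eq_or_ne c a with rfl | hca
          · simpa [Equiv.swap_apply_left] using hJa
          rcases eq_or_ne c b with rfl | hcb
          · simpa [Equiv.swap_apply_right] using hJb
          · rw [hJc c hca hcb]
            simp [Equiv.swap_apply_of_ne_of_ne hca hcb]
        rw [this, E3 n ν s a b hab]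
      · rw [if_neg hqa]
        by_cases hqs : q ∈ s.1
        · obtain ⟨d, hd⟩ := mmap_surj n ν s hqs
          have hda : d ≠ a := by rintro rfl; exact hqa hd.symm
          rcases eq_or_ne d b with rfl | hdb
          · apply E1
            intro hinj
            exact hab (hinj (by rw [hJa, hJb]; exact hd))
          · apply E1
            intro hinj
            exact hdb (hinj (by rw [hJc d hda hdb, hJb]; exact hd))
        · exact E0 n ν s _ b (by rwa [hJb])
    · rw [if_neg hpb]
      by_cases hps : p ∈ s.1
      · obtain ⟨c, hc⟩ := mmap_surj n ν s hps
        have hca : c ≠ a := by rintro rfl; exact hpa hc.symm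
        have hcb : c ≠ b := by rintro rfl; exact hpb hc.symm
        apply E1
        intro hinj
        exact hca (hinj (by rw [hJc c hca hcb, hJa]; exact hc.symm)).symm
      · exact E0 n ν s _ a (by rwa [hJa])

lemma B_diag (B : Fin n → Fin n → ℝ) (hB : ∀ k l, B k l = - B l k) (k : Fin n) :
    B k k = 0 := by
  have := hB k k; linarith

lemma inner_sum (B : Fin n → Fin n → ℝ) (hB : ∀ k l, B k l = - B l k)
    (s : Idx n ν) (a : Fin ν) (p : Fin n) :
    ∑ b : Fin ν, ∑ q : Fin n, B (Function.update (mmap n ν s) a p b) q *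
        ℓ n ν s (stdWedge n ν (Function.update (Function.update (mmap n ν s) a p) b q)) =
      if p ∈ s.1 ∧ p ≠ mmap n ν s a then 0 else B p (mmap n ν s a) := by
  set I := mmap n ν s with hI
  rcases eq_or_ne p (I a) with rfl | hpa
  · -- p = I a : everything collapses via U1
    have hIs : I a ∈ s.1 := mmap_mem n ν s a
    rw [if_neg (by simp)]
    have hupd : Function.update I a (I a) = I := Function.update_eq_self a I
    rw [hupd]
    have key : ∀ b : Fin ν, ∑ q : Fin n, B (I b) q *
        ℓ n ν s (stdWedge n ν (Function.update I b q)) = 0 := by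
      intro b
      have h2 : ∀ q : Fin n, B (I b) q * ℓ n ν s (stdWedge n ν (Function.update I b q)) =
          if q = I b then B (I b) q else 0 := by
        intro q
        rw [show Function.update I b q = Function.update (mmap n ν s) b q from rfl, U1, ← hI]
        split <;> simp
      rw [Finset.sum_congr rfl (fun q _ => h2 q),
        Finset.sum_ite_eq' Finset.univ (I b) fun q => B (I b) q,
        if_pos (Finset.mem_univ _)]
      exact B_diag n B hB (I b)
    rw [Finset.sum_congr rfl (fun b _ => key b), Finset.sum_const_zero]
    exact (B_diag n B hB (I a)).symm
  · -- p ≠ I a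
    rw [← Finset.add_sum_erase _ _ (Finset.mem_univ a)]
    have hba : ∀ b ∈ Finset.univ.erase a, b ≠ a := fun b hb => (Finset.mem_erase.mp hb).1
    -- the b = a term
    have hterm_a : ∑ q : Fin n, B (Function.update I a p a) q *
        ℓ n ν s (stdWedge n ν (Function.update (Function.update I a p) a q)) =
        B p (I a) := by
      have h1 : ∀ q : Fin n, Function.update (Function.update I a p) a q =
          Function.update (mmap n ν s) a q := fun q => by
        rw [Function.update_idem]
      have h2 : ∀ q : Fin n, B (Function.update I a p a) q *
          ℓ n ν s (stdWedge n ν (Function.update (Function.update I a p) a q)) =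
          if q = I a then B p q else 0 := by
        intro q
        rw [h1 q, U1, ← hI, Function.update_self]
        split <;> simp
      rw [Finset.sum_congr rfl (fun q _ => h2 q),
        Finset.sum_ite_eq' Finset.univ (I a) fun q => B p q, if_pos (Finset.mem_univ _)]
    rw [hterm_a]
    -- the b ≠ a terms
    have hterm_b : ∀ b ∈ Finset.univ.erase a, ∑ q : Fin n, B (Function.update I a p b) q *
        ℓ n ν s (stdWedge n ν (Function.update (Function.update I a p) b q)) =
        if p = I b then -B (I b) (I a) else 0 := by
      intro b hb
      have hbne : b ≠ a := hba b hb
      have h2 : ∀ q : Fin n, B (Function.update I a p b) q *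
          ℓ n ν s (stdWedge n ν (Function.update (Function.update I a p) b q)) =
          if p = I b then (if q = I a then -B (I b) q else 0) else 0 := by
        intro q
        rw [Function.update_of_ne hbne,
          show Function.update (Function.update I a p) b q =
            Function.update (Function.update (mmap n ν s) a p) b q from rfl,
          U2 n ν s a b (Ne.symm hbne) p q, ← hI, if_neg hpa]
        split
        · split <;> simp
        · simp
      rw [Finset.sum_congr rfl (fun q _ => h2 q)]
      split
      · rw [Finset.sum_ite_eq' Finset.univ (I a) fun q => -B (I b) q,
          if_pos (Finset.mem_univ _)]
      · simp
    rw [Finset.sum_congr rfl hterm_b]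
    by_cases hps : p ∈ s.1
    · rw [if_pos ⟨hps, hpa⟩]
      obtain ⟨c, hc⟩ := mmap_surj n ν s hps
      have hca : c ≠ a := by rintro rfl; exact hpa hc.symm
      rw [Finset.sum_eq_single_of_mem c (Finset.mem_erase.mpr ⟨hca, Finset.mem_univ c⟩)]
      · rw [if_pos (show p = I c from hc.symm), show I c = p from hc]
        ring
      · intro b hb hbc
        rw [if_neg]
        intro hpb
        exact hbc (mmap_inj n ν s ((show mmap n ν s b = p from hpb.symm).trans hc.symm))
    · rw [if_neg (by tauto)]
      rw [Finset.sum_eq_zero, add_zero]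
      intro b hb
      rw [if_neg]
      intro hpb
      exact hps (show p ∈ s.1 from hpb ▸ mmap_mem n ν s b)

lemma sum_mmap (s : Idx n ν) (G : Fin n → ℝ) :
    ∑ a : Fin ν, G (mmap n ν s a) = ∑ k ∈ s.1, G k := by
  apply Finset.sum_bij (fun a _ => mmap n ν s a)
  · intro a _; exact mmap_mem n ν s a
  · intro a _ b _ h; exact mmap_inj n ν s h
  · intro k hk
    obtain ⟨a, ha⟩ := mmap_surj n ν s hk
    exact ⟨a, Finset.mem_univ a, ha⟩
  · intro a _; rfl

lemma key_trace (B : Fin n → Fin n → ℝ) (hB : ∀ k l, B k l = - B l k)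
    (f : ⋀[ℝ]^ν (Fin n → ℝ) →ₗ[ℝ] ⋀[ℝ]^ν (Fin n → ℝ))
    (hf : ∀ ι : Fin ν → Fin n, f (stdWedge n ν ι) =
      - ∑ a : Fin ν, ∑ p : Fin n, B (ι a) p • stdWedge n ν (Function.update ι a p)) :
    LinearMap.trace ℝ _ (f ∘ₗ f) =
      ∑ s : Idx n ν, ∑ k ∈ s.1, ∑ p : Fin n, (if p ∈ s.1 then 0 else -(B k p)^2) := by
  rw [trace_eq]
  apply Finset.sum_congr rfl
  intro s _
  have hff : ℓ n ν s ((f ∘ₗ f) (stdWedge n ν (mmap n ν s))) =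
      ∑ a : Fin ν, ∑ p : Fin n, B (mmap n ν s a) p *
        ∑ b : Fin ν, ∑ q : Fin n, B (Function.update (mmap n ν s) a p b) q *
          ℓ n ν s (stdWedge n ν
            (Function.update (Function.update (mmap n ν s) a p) b q)) := by
    rw [LinearMap.comp_apply, hf, map_neg, map_sum]
    simp only [map_sum, map_smul, hf, smul_neg, neg_neg, map_neg, Finset.sum_neg_distrib,
      Finset.smul_sum, smul_eq_mul, Finset.mul_sum]
  rw [hff]
  rw [← sum_mmap n ν s]
  apply Finset.sum_congr rfl
  intro a _
  apply Finset.sum_congr rfl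
  intro p _
  rw [inner_sum n ν B hB s a p]
  by_cases hps : p ∈ s.1
  · rcases eq_or_ne p (mmap n ν s a) with rfl | hpa
    · rw [if_neg (by tauto), if_pos hps, B_diag n B hB, zero_mul]
    · rw [if_pos ⟨hps, hpa⟩, if_pos hps, mul_zero]
  · rw [if_neg (by tauto), if_neg hps, hB p (mmap n ν s a)]
    ring

lemma count_sum (hν1 : 1 ≤ ν) (k l : Fin n) (hkl : k ≠ l) :
    ∑ s : Idx n ν, (if k ∈ s.1 ∧ l ∉ s.1 then (1:ℝ) else 0) =
      ((n-2).choose (ν-1) : ℝ) := by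
  rw [← Finset.sum_subtype (Finset.univ.powersetCard ν)
    (fun t => by simp [Finset.mem_powersetCard_univ]) (fun t => if k ∈ t ∧ l ∉ t then (1:ℝ) else 0)]
  rw [Finset.sum_boole]
  congr 1
  rw [show ((Finset.univ.powersetCard ν).filter fun t => k ∈ t ∧ l ∉ t).card =
    (((Finset.univ.erase l).erase k).powersetCard (ν-1)).card from ?_]
  · rw [Finset.card_powersetCard, Finset.card_erase_of_mem
      (Finset.mem_erase.mpr ⟨hkl, Finset.mem_univ k⟩), Finset.card_erase_of_mem (Finset.mem_univ l),
      Finset.card_univ, Fintype.card_fin, Nat.sub_sub]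
  · apply Finset.card_bij' (fun t _ => t.erase k) (fun u _ => insert k u)
    · intro t ht
      rw [Finset.mem_filter] at ht
      exact Finset.insert_erase ht.2.1
    · intro u hu
      rw [Finset.mem_powersetCard] at hu
      have hku : k ∉ u := fun h => (Finset.mem_erase.mp (hu.1 h)).1 rfl
      exact Finset.erase_insert hku
    · intro t ht
      rw [Finset.mem_filter, Finset.mem_powersetCard_univ] at ht
      obtain ⟨hcard, hkt, hlt⟩ := ht
      rw [Finset.mem_powersetCard]
      constructor
      · intro x hx
        rw [Finset.mem_erase] at hx ⊢
        refine ⟨hx.1, Finset.mem_erase.mpr ⟨?_, Finset.mem_univ x⟩⟩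
        rintro rfl; exact hlt hx.2
      · rw [Finset.card_erase_of_mem hkt, hcard]
    · intro u hu
      rw [Finset.mem_powersetCard] at hu
      obtain ⟨hsub, hcard⟩ := hu
      have hku : k ∉ u := fun h => (Finset.mem_erase.mp (hsub h)).1 rfl
      have hlu : l ∉ u := fun h => (Finset.mem_erase.mp (Finset.mem_erase.mp (hsub h)).2).1 rfl
      rw [Finset.mem_filter, Finset.mem_powersetCard_univ]
      refine ⟨?_, Finset.mem_insert_self k u, ?_⟩
      · rw [Finset.card_insert_of_notMem hku, hcard]
        omega
      · rw [Finset.mem_insert]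
        rintro (rfl | h)
        · exact hkl rfl
        · exact hlu h

lemma count_total (hν1 : 1 ≤ ν) (F : Fin n → Fin n → ℝ) (hdiag : ∀ k, F k k = 0) :
    ∑ s : Idx n ν, ∑ k ∈ s.1, ∑ p : Fin n, (if p ∈ s.1 then 0 else F k p) =
      ((n-2).choose (ν-1) : ℝ) * ∑ k : Fin n, ∑ p : Fin n, F k p := by
  have step1 : ∀ s : Idx n ν, ∑ k ∈ s.1, ∑ p : Fin n, (if p ∈ s.1 then 0 else F k p) =
      ∑ k : Fin n, ∑ p : Fin n, (if k ∈ s.1 ∧ p ∉ s.1 then (1:ℝ) else 0) * F k p := by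
    intro s
    have h1 : ∀ k ∈ s.1, (∑ p : Fin n, if p ∈ s.1 then (0:ℝ) else F k p) =
        ∑ p : Fin n, (if k ∈ s.1 ∧ p ∉ s.1 then (1:ℝ) else 0) * F k p := by
      intro k hk
      apply Finset.sum_congr rfl
      intro p _
      by_cases hp : p ∈ s.1 <;> simp [hp, hk]
    rw [Finset.sum_congr rfl h1,
      Finset.sum_subset (Finset.subset_univ s.1)
        (fun k _ hk => Finset.sum_eq_zero fun p _ => by simp [hk])]
  rw [Finset.sum_congr rfl (fun s _ => step1 s), Finset.sum_comm]
  refine Eq.trans (Finset.sum_congr rfl fun k _ => Finset.sum_comm) ?_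
  rw [Finset.mul_sum]
  apply Finset.sum_congr rfl
  intro k _
  rw [Finset.mul_sum]
  apply Finset.sum_congr rfl
  intro p _
  rw [← Finset.sum_mul]
  rcases eq_or_ne k p with rfl | hkp
  · rw [hdiag k, mul_zero, mul_zero]
  · rw [count_sum n ν hν1 k p hkp]

end TCF

lemma chooseZ_cast (n ν : ℕ) (hn2 : 2 ≤ n) (hν1 : 1 ≤ ν) :
    ((chooseZ ((n : ℤ) - 2) ((ν : ℤ) - 1) : ℤ) : ℝ) = ((n-2).choose (ν-1) : ℝ) := by
  unfold chooseZ
  by_cases h : (ν : ℤ) - 1 ≤ (n : ℤ) - 2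
  · rw [if_pos ⟨by omega, by omega, h⟩]
    have h1 : ((n : ℤ) - 2).toNat = n - 2 := by omega
    have h2 : ((ν : ℤ) - 1).toNat = ν - 1 := by omega
    rw [h1, h2]
    norm_num
  · rw [if_neg (by tauto)]
    rw [Nat.choose_eq_zero_of_lt (by omega)]
    norm_num


/-- Formula (7.8) of the paper: for the curvature operators `𝓡^ν_{ij}` of the connection
induced on `ν`-forms (formulas (7.4)–(7.5), expressed in an orthonormal frame),
`∑_{i,j} Tr(𝓡^ν_{ij} ∘ 𝓡^ν_{ij}) = − C(n−2, ν−1)·|R|²`. -/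
theorem trace_curvature_forms_sq (n ν : ℕ) (hn : 1 ≤ n) (hν : ν ≤ n)
    (R : Fin n → Fin n → Fin n → Fin n → ℝ)
    (hskew₁ : ∀ i j k l, R i j k l = - R j i k l)
    (hskew₂ : ∀ i j k l, R i j k l = - R i j l k)
    (hpair : ∀ i j k l, R i j k l = R k l i j)
    (hbianchi : ∀ i j k l, R i j k l + R i k l j + R i l j k = 0)
    (𝓡 : Fin n → Fin n → (⋀[ℝ]^ν (Fin n → ℝ) →ₗ[ℝ] ⋀[ℝ]^ν (Fin n → ℝ)))
    (h𝓡 : ∀ (i j : Fin n) (ι : Fin ν → Fin n),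
      𝓡 i j (stdWedge n ν ι) =
        - ∑ a : Fin ν, ∑ p : Fin n,
            R (ι a) p i j • stdWedge n ν (Function.update ι a p)) :
    ∑ i : Fin n, ∑ j : Fin n, LinearMap.trace ℝ _ (𝓡 i j ∘ₗ 𝓡 i j) =
      - (chooseZ ((n : ℤ) - 2) ((ν : ℤ) - 1) : ℝ) *
        ∑ i : Fin n, ∑ j : Fin n, ∑ k : Fin n, ∑ l : Fin n, (R i j k l) ^ 2 := by
  classical
  rcases Nat.eq_zero_or_pos ν with hν0 | hν1
  · subst hν0
    have hL : ∀ i j : Fin n, LinearMap.trace ℝ _ (𝓡 i j ∘ₗ 𝓡 i j) = 0 := by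
      intro i j
      rw [TCF.key_trace n 0 (fun k l => R k l i j) (fun k l => hskew₁ k l i j) (𝓡 i j) (h𝓡 i j)]
      apply Finset.sum_eq_zero
      intro s _
      have hs : s.1 = ∅ := Finset.card_eq_zero.mp s.2
      rw [hs]
      simp
    have hC : chooseZ ((n : ℤ) - 2) (-1) = 0 := by
      unfold chooseZ
      rw [if_neg (by omega)]
    simp only [hL, Finset.sum_const_zero, Nat.cast_zero, Nat.cast_ofNat]
    norm_num
    exact Or.inl hC
  · have hstep : ∀ i j : Fin n, LinearMap.trace ℝ _ (𝓡 i j ∘ₗ 𝓡 i j) =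
        ((n-2).choose (ν-1) : ℝ) * ∑ k : Fin n, ∑ p : Fin n, -(R i j k p)^2 := by
      intro i j
      rw [TCF.key_trace n ν (fun k l => R k l i j) (fun k l => hskew₁ k l i j) (𝓡 i j) (h𝓡 i j),
        TCF.count_total n ν hν1 (fun k p => -(R k p i j)^2)
          (fun k => by
            show -R k k i j ^ 2 = 0
            rw [TCF.B_diag n (fun k l => R k l i j) (fun k l => hskew₁ k l i j) k]
            ring)]
      congr 1
      apply Finset.sum_congr rfl
      intro k _
      apply Finset.sum_congr rfl
      intro p _
      rw [hpair i j k p]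
    rw [Finset.sum_congr rfl (fun i _ => Finset.sum_congr rfl (fun j _ => hstep i j))]
    simp only [← Finset.mul_sum]
    by_cases hn2 : 2 ≤ n
    · rw [chooseZ_cast n ν hn2 hν1]
      simp only [Finset.sum_neg_distrib]
      ring
    · have hn1 : n = 1 := by omega
      have hdiag : ∀ i j k l : Fin n, R i j k l = 0 := by
        intro i j k l
        have : i = j := by omega
        subst this
        have := hskew₁ i i k l
        linarith
      simp [hdiag]
end

section
/- Let R_{ijkl} be an algebraic curvature tensor on ℝ⁴, and let B and C be the 6×6 symmetric matrices indexed by ordered pairs (i,j), i < j, from {1,2,3,4} (in the order (1,2),(1,3),(1,4),(2,3),(2,4),(3,4)) defined by B_{(ij),(kl)} = δ_{ik}Ric_{jl} + δ_{jl}Ric_{ik} − δ_{il}Ric_{jk} − δ_{jk}Ric_{il} and C_{(ij),(kl)} = R_{ijkl}. Then Tr((B − 2C)²) = S² − 2|Ric|² + |R|²; equivalently, for the operator A₂ on Λ²(ℝ⁴), whose matrix in the basis e_i∧e_j (i<j) is B − 2C, one has Tr(A₂²) = S² − 2|Ric|² + |R|². -/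
/-- Index set for the ordered pairs `(i,j)`, `i < j`, from `{1,2,3,4}` labelling the
standard basis `e_i ∧ e_j` of `Λ²(ℝ⁴)`. -/
abbrev PairIdx : Type := {p : Fin 4 × Fin 4 // p.1 < p.2}

/-- The Ricci tensor `Ric_{ij} = ∑_p R_{ipjp}`. -/
def ricci4 (R : Fin 4 → Fin 4 → Fin 4 → Fin 4 → ℝ) (i j : Fin 4) : ℝ :=
  ∑ p : Fin 4, R i p j p

/-- Kronecker delta on `Fin 4`. -/
def kdelta (i j : Fin 4) : ℝ := if i = j then 1 else 0

/-- The matrix `B` with `B_{(ij),(kl)} = δ_{ik}Ric_{jl} + δ_{jl}Ric_{ik}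
− δ_{il}Ric_{jk} − δ_{jk}Ric_{il}`. -/
def Bmat (R : Fin 4 → Fin 4 → Fin 4 → Fin 4 → ℝ) : Matrix PairIdx PairIdx ℝ :=
  Matrix.of fun p q =>
    kdelta p.1.1 q.1.1 * ricci4 R p.1.2 q.1.2 + kdelta p.1.2 q.1.2 * ricci4 R p.1.1 q.1.1
      - kdelta p.1.1 q.1.2 * ricci4 R p.1.2 q.1.1 - kdelta p.1.2 q.1.1 * ricci4 R p.1.1 q.1.2

/-- The matrix `C` with `C_{(ij),(kl)} = R_{ijkl}`. -/
def Cmat (R : Fin 4 → Fin 4 → Fin 4 → Fin 4 → ℝ) : Matrix PairIdx PairIdx ℝ :=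
  Matrix.of fun p q => R p.1.1 p.1.2 q.1.1 q.1.2

def pairOfFin6 : Fin 6 → PairIdx
  | 0 => ⟨(0, 1), by decide⟩
  | 1 => ⟨(0, 2), by decide⟩
  | 2 => ⟨(0, 3), by decide⟩
  | 3 => ⟨(1, 2), by decide⟩
  | 4 => ⟨(1, 3), by decide⟩
  | 5 => ⟨(2, 3), by decide⟩

lemma pairOfFin6_bij : Function.Bijective pairOfFin6 := by decide

lemma sum_pairIdx (f : PairIdx → ℝ) : ∑ p : PairIdx, f p = ∑ i : Fin 6, f (pairOfFin6 i) :=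
  (Fintype.sum_bijective pairOfFin6 pairOfFin6_bij _ _ (fun _ => rfl)).symm

set_option maxHeartbeats 4000000 in
/-- The case `(n,ν) = (4,2)` of formula (7.7) of the paper: for the operator
`A₂ = B − 2C` on `Λ²(ℝ⁴)`, one has `Tr(A₂²) = S² − 2|Ric|² + |R|²`. -/
theorem trace_A2_sq_dim4 (R : Fin 4 → Fin 4 → Fin 4 → Fin 4 → ℝ)
    (hskew₁ : ∀ i j k l, R i j k l = - R j i k l)
    (hskew₂ : ∀ i j k l, R i j k l = - R i j l k)
    (hpair : ∀ i j k l, R i j k l = R k l i j)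
    (hbianchi : ∀ i j k l, R i j k l + R i k l j + R i l j k = 0) :
    Matrix.trace ((Bmat R - (2 : ℝ) • Cmat R) * (Bmat R - (2 : ℝ) • Cmat R)) =
      (∑ i : Fin 4, ricci4 R i i) ^ 2 -
        2 * (∑ i : Fin 4, ∑ j : Fin 4, (ricci4 R i j) ^ 2) +
        ∑ i : Fin 4, ∑ j : Fin 4, ∑ k : Fin 4, ∑ l : Fin 4, (R i j k l) ^ 2 := by
  have h0000 : R 0 0 0 0 = 0 := by linear_combination (1/2 : ℝ) * (hskew₁ 0 0 0 0)
  have h0001 : R 0 0 0 1 = 0 := by linear_combination (1/2 : ℝ) * (hskew₁ 0 0 0 1)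
  have h0002 : R 0 0 0 2 = 0 := by linear_combination (1/2 : ℝ) * (hskew₁ 0 0 0 2)
  have h0003 : R 0 0 0 3 = 0 := by linear_combination (1/2 : ℝ) * (hskew₁ 0 0 0 3)
  have h0010 : R 0 0 1 0 = 0 := by linear_combination (1/2 : ℝ) * (hskew₁ 0 0 1 0)
  have h0011 : R 0 0 1 1 = 0 := by linear_combination (1/2 : ℝ) * (hskew₁ 0 0 1 1)
  have h0012 : R 0 0 1 2 = 0 := by linear_combination (1/2 : ℝ) * (hskew₁ 0 0 1 2)
  have h0013 : R 0 0 1 3 = 0 := by linear_combination (1/2 : ℝ) * (hskew₁ 0 0 1 3)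
  have h0020 : R 0 0 2 0 = 0 := by linear_combination (1/2 : ℝ) * (hskew₁ 0 0 2 0)
  have h0021 : R 0 0 2 1 = 0 := by linear_combination (1/2 : ℝ) * (hskew₁ 0 0 2 1)
  have h0022 : R 0 0 2 2 = 0 := by linear_combination (1/2 : ℝ) * (hskew₁ 0 0 2 2)
  have h0023 : R 0 0 2 3 = 0 := by linear_combination (1/2 : ℝ) * (hskew₁ 0 0 2 3)
  have h0030 : R 0 0 3 0 = 0 := by linear_combination (1/2 : ℝ) * (hskew₁ 0 0 3 0)
  have h0031 : R 0 0 3 1 = 0 := by linear_combination (1/2 : ℝ) * (hskew₁ 0 0 3 1)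
  have h0032 : R 0 0 3 2 = 0 := by linear_combination (1/2 : ℝ) * (hskew₁ 0 0 3 2)
  have h0033 : R 0 0 3 3 = 0 := by linear_combination (1/2 : ℝ) * (hskew₁ 0 0 3 3)
  have h0100 : R 0 1 0 0 = 0 := by linear_combination (1/2 : ℝ) * (hskew₂ 0 1 0 0)
  have h0110 : R 0 1 1 0 = -R 0 1 0 1 := by linear_combination (1 : ℝ) * (hskew₂ 0 1 1 0)
  have h0111 : R 0 1 1 1 = 0 := by linear_combination (1/2 : ℝ) * (hskew₂ 0 1 1 1)
  have h0120 : R 0 1 2 0 = -R 0 1 0 2 := by linear_combination (1 : ℝ) * (hskew₂ 0 1 2 0)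
  have h0121 : R 0 1 2 1 = -R 0 1 1 2 := by linear_combination (1 : ℝ) * (hskew₂ 0 1 2 1)
  have h0122 : R 0 1 2 2 = 0 := by linear_combination (1/2 : ℝ) * (hskew₂ 0 1 2 2)
  have h0130 : R 0 1 3 0 = -R 0 1 0 3 := by linear_combination (1 : ℝ) * (hskew₂ 0 1 3 0)
  have h0131 : R 0 1 3 1 = -R 0 1 1 3 := by linear_combination (1 : ℝ) * (hskew₂ 0 1 3 1)
  have h0132 : R 0 1 3 2 = -R 0 1 2 3 := by linear_combination (1 : ℝ) * (hskew₂ 0 1 3 2)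
  have h0133 : R 0 1 3 3 = 0 := by linear_combination (1/2 : ℝ) * (hskew₂ 0 1 3 3)
  have h0200 : R 0 2 0 0 = 0 := by linear_combination (1/2 : ℝ) * (hskew₂ 0 2 0 0)
  have h0201 : R 0 2 0 1 = R 0 1 0 2 := by linear_combination (1 : ℝ) * (hpair 0 2 0 1)
  have h0210 : R 0 2 1 0 = -R 0 1 0 2 := by linear_combination (1 : ℝ) * (hskew₂ 0 2 1 0) + (-1 : ℝ) * (hpair 0 2 0 1)
  have h0211 : R 0 2 1 1 = 0 := by linear_combination (1/2 : ℝ) * (hskew₂ 0 2 1 1)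
  have h0220 : R 0 2 2 0 = -R 0 2 0 2 := by linear_combination (1 : ℝ) * (hskew₂ 0 2 2 0)
  have h0221 : R 0 2 2 1 = -R 0 2 1 2 := by linear_combination (1 : ℝ) * (hskew₂ 0 2 2 1)
  have h0222 : R 0 2 2 2 = 0 := by linear_combination (1/2 : ℝ) * (hskew₂ 0 2 2 2)
  have h0230 : R 0 2 3 0 = -R 0 2 0 3 := by linear_combination (1 : ℝ) * (hskew₂ 0 2 3 0)
  have h0231 : R 0 2 3 1 = -R 0 2 1 3 := by linear_combination (1 : ℝ) * (hskew₂ 0 2 3 1)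
  have h0232 : R 0 2 3 2 = -R 0 2 2 3 := by linear_combination (1 : ℝ) * (hskew₂ 0 2 3 2)
  have h0233 : R 0 2 3 3 = 0 := by linear_combination (1/2 : ℝ) * (hskew₂ 0 2 3 3)
  have h0300 : R 0 3 0 0 = 0 := by linear_combination (1/2 : ℝ) * (hskew₂ 0 3 0 0)
  have h0301 : R 0 3 0 1 = R 0 1 0 3 := by linear_combination (1 : ℝ) * (hpair 0 3 0 1)
  have h0302 : R 0 3 0 2 = R 0 2 0 3 := by linear_combination (1 : ℝ) * (hpair 0 3 0 2)
  have h0310 : R 0 3 1 0 = -R 0 1 0 3 := by linear_combination (1 : ℝ) * (hskew₂ 0 3 1 0) + (-1 : ℝ) * (hpair 0 3 0 1)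
  have h0311 : R 0 3 1 1 = 0 := by linear_combination (1/2 : ℝ) * (hskew₂ 0 3 1 1)
  have h0320 : R 0 3 2 0 = -R 0 2 0 3 := by linear_combination (1 : ℝ) * (hskew₂ 0 3 2 0) + (-1 : ℝ) * (hpair 0 3 0 2)
  have h0321 : R 0 3 2 1 = -R 0 3 1 2 := by linear_combination (1 : ℝ) * (hskew₂ 0 3 2 1)
  have h0322 : R 0 3 2 2 = 0 := by linear_combination (1/2 : ℝ) * (hskew₂ 0 3 2 2)
  have h0330 : R 0 3 3 0 = -R 0 3 0 3 := by linear_combination (1 : ℝ) * (hskew₂ 0 3 3 0)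
  have h0331 : R 0 3 3 1 = -R 0 3 1 3 := by linear_combination (1 : ℝ) * (hskew₂ 0 3 3 1)
  have h0332 : R 0 3 3 2 = -R 0 3 2 3 := by linear_combination (1 : ℝ) * (hskew₂ 0 3 3 2)
  have h0333 : R 0 3 3 3 = 0 := by linear_combination (1/2 : ℝ) * (hskew₂ 0 3 3 3)
  have h1000 : R 1 0 0 0 = 0 := by linear_combination (1/2 : ℝ) * (hskew₂ 1 0 0 0)
  have h1001 : R 1 0 0 1 = -R 0 1 0 1 := by linear_combination (1 : ℝ) * (hskew₁ 1 0 0 1)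
  have h1002 : R 1 0 0 2 = -R 0 1 0 2 := by linear_combination (1 : ℝ) * (hskew₁ 1 0 0 2)
  have h1003 : R 1 0 0 3 = -R 0 1 0 3 := by linear_combination (1 : ℝ) * (hskew₁ 1 0 0 3)
  have h1010 : R 1 0 1 0 = R 0 1 0 1 := by linear_combination (1 : ℝ) * (hskew₁ 1 0 1 0) + (-1 : ℝ) * (hskew₂ 0 1 1 0)
  have h1011 : R 1 0 1 1 = 0 := by linear_combination (1/2 : ℝ) * (hskew₂ 1 0 1 1)
  have h1012 : R 1 0 1 2 = -R 0 1 1 2 := by linear_combination (1 : ℝ) * (hskew₁ 1 0 1 2)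
  have h1013 : R 1 0 1 3 = -R 0 1 1 3 := by linear_combination (1 : ℝ) * (hskew₁ 1 0 1 3)
  have h1020 : R 1 0 2 0 = R 0 1 0 2 := by linear_combination (1 : ℝ) * (hskew₁ 1 0 2 0) + (-1 : ℝ) * (hskew₂ 0 1 2 0)
  have h1021 : R 1 0 2 1 = R 0 1 1 2 := by linear_combination (1 : ℝ) * (hskew₁ 1 0 2 1) + (-1 : ℝ) * (hskew₂ 0 1 2 1)
  have h1022 : R 1 0 2 2 = 0 := by linear_combination (1/2 : ℝ) * (hskew₂ 1 0 2 2)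
  have h1023 : R 1 0 2 3 = -R 0 1 2 3 := by linear_combination (1 : ℝ) * (hskew₁ 1 0 2 3)
  have h1030 : R 1 0 3 0 = R 0 1 0 3 := by linear_combination (1 : ℝ) * (hskew₁ 1 0 3 0) + (-1 : ℝ) * (hskew₂ 0 1 3 0)
  have h1031 : R 1 0 3 1 = R 0 1 1 3 := by linear_combination (1 : ℝ) * (hskew₁ 1 0 3 1) + (-1 : ℝ) * (hskew₂ 0 1 3 1)
  have h1032 : R 1 0 3 2 = R 0 1 2 3 := by linear_combination (1 : ℝ) * (hskew₁ 1 0 3 2) + (-1 : ℝ) * (hskew₂ 0 1 3 2)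
  have h1033 : R 1 0 3 3 = 0 := by linear_combination (1/2 : ℝ) * (hskew₂ 1 0 3 3)
  have h1100 : R 1 1 0 0 = 0 := by linear_combination (1/2 : ℝ) * (hskew₁ 1 1 0 0)
  have h1101 : R 1 1 0 1 = 0 := by linear_combination (1/2 : ℝ) * (hskew₁ 1 1 0 1)
  have h1102 : R 1 1 0 2 = 0 := by linear_combination (1/2 : ℝ) * (hskew₁ 1 1 0 2)
  have h1103 : R 1 1 0 3 = 0 := by linear_combination (1/2 : ℝ) * (hskew₁ 1 1 0 3)
  have h1110 : R 1 1 1 0 = 0 := by linear_combination (1/2 : ℝ) * (hskew₁ 1 1 1 0)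
  have h1111 : R 1 1 1 1 = 0 := by linear_combination (1/2 : ℝ) * (hskew₁ 1 1 1 1)
  have h1112 : R 1 1 1 2 = 0 := by linear_combination (1/2 : ℝ) * (hskew₁ 1 1 1 2)
  have h1113 : R 1 1 1 3 = 0 := by linear_combination (1/2 : ℝ) * (hskew₁ 1 1 1 3)
  have h1120 : R 1 1 2 0 = 0 := by linear_combination (1/2 : ℝ) * (hskew₁ 1 1 2 0)
  have h1121 : R 1 1 2 1 = 0 := by linear_combination (1/2 : ℝ) * (hskew₁ 1 1 2 1)
  have h1122 : R 1 1 2 2 = 0 := by linear_combination (1/2 : ℝ) * (hskew₁ 1 1 2 2)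
  have h1123 : R 1 1 2 3 = 0 := by linear_combination (1/2 : ℝ) * (hskew₁ 1 1 2 3)
  have h1130 : R 1 1 3 0 = 0 := by linear_combination (1/2 : ℝ) * (hskew₁ 1 1 3 0)
  have h1131 : R 1 1 3 1 = 0 := by linear_combination (1/2 : ℝ) * (hskew₁ 1 1 3 1)
  have h1132 : R 1 1 3 2 = 0 := by linear_combination (1/2 : ℝ) * (hskew₁ 1 1 3 2)
  have h1133 : R 1 1 3 3 = 0 := by linear_combination (1/2 : ℝ) * (hskew₁ 1 1 3 3)
  have h1200 : R 1 2 0 0 = 0 := by linear_combination (1/2 : ℝ) * (hskew₂ 1 2 0 0)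
  have h1201 : R 1 2 0 1 = R 0 1 1 2 := by linear_combination (1 : ℝ) * (hpair 1 2 0 1)
  have h1202 : R 1 2 0 2 = R 0 2 1 2 := by linear_combination (1 : ℝ) * (hpair 1 2 0 2)
  have h1203 : R 1 2 0 3 = R 0 3 1 2 := by linear_combination (1 : ℝ) * (hpair 1 2 0 3)
  have h1210 : R 1 2 1 0 = -R 0 1 1 2 := by linear_combination (1 : ℝ) * (hskew₂ 1 2 1 0) + (-1 : ℝ) * (hpair 1 2 0 1)
  have h1211 : R 1 2 1 1 = 0 := by linear_combination (1/2 : ℝ) * (hskew₂ 1 2 1 1)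
  have h1220 : R 1 2 2 0 = -R 0 2 1 2 := by linear_combination (1 : ℝ) * (hskew₂ 1 2 2 0) + (-1 : ℝ) * (hpair 1 2 0 2)
  have h1221 : R 1 2 2 1 = -R 1 2 1 2 := by linear_combination (1 : ℝ) * (hskew₂ 1 2 2 1)
  have h1222 : R 1 2 2 2 = 0 := by linear_combination (1/2 : ℝ) * (hskew₂ 1 2 2 2)
  have h1230 : R 1 2 3 0 = -R 0 3 1 2 := by linear_combination (1 : ℝ) * (hskew₂ 1 2 3 0) + (-1 : ℝ) * (hpair 1 2 0 3)
  have h1231 : R 1 2 3 1 = -R 1 2 1 3 := by linear_combination (1 : ℝ) * (hskew₂ 1 2 3 1)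
  have h1232 : R 1 2 3 2 = -R 1 2 2 3 := by linear_combination (1 : ℝ) * (hskew₂ 1 2 3 2)
  have h1233 : R 1 2 3 3 = 0 := by linear_combination (1/2 : ℝ) * (hskew₂ 1 2 3 3)
  have h1300 : R 1 3 0 0 = 0 := by linear_combination (1/2 : ℝ) * (hskew₂ 1 3 0 0)
  have h1301 : R 1 3 0 1 = R 0 1 1 3 := by linear_combination (1 : ℝ) * (hpair 1 3 0 1)
  have h1302 : R 1 3 0 2 = R 0 2 1 3 := by linear_combination (1 : ℝ) * (hpair 1 3 0 2)
  have h1303 : R 1 3 0 3 = R 0 3 1 3 := by linear_combination (1 : ℝ) * (hpair 1 3 0 3)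
  have h1310 : R 1 3 1 0 = -R 0 1 1 3 := by linear_combination (1 : ℝ) * (hskew₂ 1 3 1 0) + (-1 : ℝ) * (hpair 1 3 0 1)
  have h1311 : R 1 3 1 1 = 0 := by linear_combination (1/2 : ℝ) * (hskew₂ 1 3 1 1)
  have h1312 : R 1 3 1 2 = R 1 2 1 3 := by linear_combination (1 : ℝ) * (hpair 1 3 1 2)
  have h1320 : R 1 3 2 0 = -R 0 2 1 3 := by linear_combination (1 : ℝ) * (hskew₂ 1 3 2 0) + (-1 : ℝ) * (hpair 1 3 0 2)
  have h1321 : R 1 3 2 1 = -R 1 2 1 3 := by linear_combination (1 : ℝ) * (hskew₂ 1 3 2 1) + (-1 : ℝ) * (hpair 1 3 1 2)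
  have h1322 : R 1 3 2 2 = 0 := by linear_combination (1/2 : ℝ) * (hskew₂ 1 3 2 2)
  have h1330 : R 1 3 3 0 = -R 0 3 1 3 := by linear_combination (1 : ℝ) * (hskew₂ 1 3 3 0) + (-1 : ℝ) * (hpair 1 3 0 3)
  have h1331 : R 1 3 3 1 = -R 1 3 1 3 := by linear_combination (1 : ℝ) * (hskew₂ 1 3 3 1)
  have h1332 : R 1 3 3 2 = -R 1 3 2 3 := by linear_combination (1 : ℝ) * (hskew₂ 1 3 3 2)
  have h1333 : R 1 3 3 3 = 0 := by linear_combination (1/2 : ℝ) * (hskew₂ 1 3 3 3)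
  have h2000 : R 2 0 0 0 = 0 := by linear_combination (1/2 : ℝ) * (hskew₂ 2 0 0 0)
  have h2001 : R 2 0 0 1 = -R 0 1 0 2 := by linear_combination (1 : ℝ) * (hskew₁ 2 0 0 1) + (-1 : ℝ) * (hpair 0 2 0 1)
  have h2002 : R 2 0 0 2 = -R 0 2 0 2 := by linear_combination (1 : ℝ) * (hskew₁ 2 0 0 2)
  have h2003 : R 2 0 0 3 = -R 0 2 0 3 := by linear_combination (1 : ℝ) * (hskew₁ 2 0 0 3)
  have h2010 : R 2 0 1 0 = R 0 1 0 2 := by linear_combination (1 : ℝ) * (hskew₁ 2 0 1 0) + (-1 : ℝ) * (hskew₂ 0 2 1 0) + (1 : ℝ) * (hpair 0 2 0 1)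
  have h2011 : R 2 0 1 1 = 0 := by linear_combination (1/2 : ℝ) * (hskew₂ 2 0 1 1)
  have h2012 : R 2 0 1 2 = -R 0 2 1 2 := by linear_combination (1 : ℝ) * (hskew₁ 2 0 1 2)
  have h2013 : R 2 0 1 3 = -R 0 2 1 3 := by linear_combination (1 : ℝ) * (hskew₁ 2 0 1 3)
  have h2020 : R 2 0 2 0 = R 0 2 0 2 := by linear_combination (1 : ℝ) * (hskew₁ 2 0 2 0) + (-1 : ℝ) * (hskew₂ 0 2 2 0)
  have h2021 : R 2 0 2 1 = R 0 2 1 2 := by linear_combination (1 : ℝ) * (hskew₁ 2 0 2 1) + (-1 : ℝ) * (hskew₂ 0 2 2 1)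
  have h2022 : R 2 0 2 2 = 0 := by linear_combination (1/2 : ℝ) * (hskew₂ 2 0 2 2)
  have h2023 : R 2 0 2 3 = -R 0 2 2 3 := by linear_combination (1 : ℝ) * (hskew₁ 2 0 2 3)
  have h2030 : R 2 0 3 0 = R 0 2 0 3 := by linear_combination (1 : ℝ) * (hskew₁ 2 0 3 0) + (-1 : ℝ) * (hskew₂ 0 2 3 0)
  have h2031 : R 2 0 3 1 = R 0 2 1 3 := by linear_combination (1 : ℝ) * (hskew₁ 2 0 3 1) + (-1 : ℝ) * (hskew₂ 0 2 3 1)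
  have h2032 : R 2 0 3 2 = R 0 2 2 3 := by linear_combination (1 : ℝ) * (hskew₁ 2 0 3 2) + (-1 : ℝ) * (hskew₂ 0 2 3 2)
  have h2033 : R 2 0 3 3 = 0 := by linear_combination (1/2 : ℝ) * (hskew₂ 2 0 3 3)
  have h2100 : R 2 1 0 0 = 0 := by linear_combination (1/2 : ℝ) * (hskew₂ 2 1 0 0)
  have h2101 : R 2 1 0 1 = -R 0 1 1 2 := by linear_combination (1 : ℝ) * (hskew₁ 2 1 0 1) + (-1 : ℝ) * (hpair 1 2 0 1)
  have h2102 : R 2 1 0 2 = -R 0 2 1 2 := by linear_combination (1 : ℝ) * (hskew₁ 2 1 0 2) + (-1 : ℝ) * (hpair 1 2 0 2)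
  have h2103 : R 2 1 0 3 = -R 0 3 1 2 := by linear_combination (1 : ℝ) * (hskew₁ 2 1 0 3) + (-1 : ℝ) * (hpair 1 2 0 3)
  have h2110 : R 2 1 1 0 = R 0 1 1 2 := by linear_combination (1 : ℝ) * (hskew₁ 2 1 1 0) + (-1 : ℝ) * (hskew₂ 1 2 1 0) + (1 : ℝ) * (hpair 1 2 0 1)
  have h2111 : R 2 1 1 1 = 0 := by linear_combination (1/2 : ℝ) * (hskew₂ 2 1 1 1)
  have h2112 : R 2 1 1 2 = -R 1 2 1 2 := by linear_combination (1 : ℝ) * (hskew₁ 2 1 1 2)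
  have h2113 : R 2 1 1 3 = -R 1 2 1 3 := by linear_combination (1 : ℝ) * (hskew₁ 2 1 1 3)
  have h2120 : R 2 1 2 0 = R 0 2 1 2 := by linear_combination (1 : ℝ) * (hskew₁ 2 1 2 0) + (-1 : ℝ) * (hskew₂ 1 2 2 0) + (1 : ℝ) * (hpair 1 2 0 2)
  have h2121 : R 2 1 2 1 = R 1 2 1 2 := by linear_combination (1 : ℝ) * (hskew₁ 2 1 2 1) + (-1 : ℝ) * (hskew₂ 1 2 2 1)
  have h2122 : R 2 1 2 2 = 0 := by linear_combination (1/2 : ℝ) * (hskew₂ 2 1 2 2)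
  have h2123 : R 2 1 2 3 = -R 1 2 2 3 := by linear_combination (1 : ℝ) * (hskew₁ 2 1 2 3)
  have h2130 : R 2 1 3 0 = R 0 3 1 2 := by linear_combination (1 : ℝ) * (hskew₁ 2 1 3 0) + (-1 : ℝ) * (hskew₂ 1 2 3 0) + (1 : ℝ) * (hpair 1 2 0 3)
  have h2131 : R 2 1 3 1 = R 1 2 1 3 := by linear_combination (1 : ℝ) * (hskew₁ 2 1 3 1) + (-1 : ℝ) * (hskew₂ 1 2 3 1)
  have h2132 : R 2 1 3 2 = R 1 2 2 3 := by linear_combination (1 : ℝ) * (hskew₁ 2 1 3 2) + (-1 : ℝ) * (hskew₂ 1 2 3 2)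
  have h2133 : R 2 1 3 3 = 0 := by linear_combination (1/2 : ℝ) * (hskew₂ 2 1 3 3)
  have h2200 : R 2 2 0 0 = 0 := by linear_combination (1/2 : ℝ) * (hskew₁ 2 2 0 0)
  have h2201 : R 2 2 0 1 = 0 := by linear_combination (1/2 : ℝ) * (hskew₁ 2 2 0 1)
  have h2202 : R 2 2 0 2 = 0 := by linear_combination (1/2 : ℝ) * (hskew₁ 2 2 0 2)
  have h2203 : R 2 2 0 3 = 0 := by linear_combination (1/2 : ℝ) * (hskew₁ 2 2 0 3)
  have h2210 : R 2 2 1 0 = 0 := by linear_combination (1/2 : ℝ) * (hskew₁ 2 2 1 0)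
  have h2211 : R 2 2 1 1 = 0 := by linear_combination (1/2 : ℝ) * (hskew₁ 2 2 1 1)
  have h2212 : R 2 2 1 2 = 0 := by linear_combination (1/2 : ℝ) * (hskew₁ 2 2 1 2)
  have h2213 : R 2 2 1 3 = 0 := by linear_combination (1/2 : ℝ) * (hskew₁ 2 2 1 3)
  have h2220 : R 2 2 2 0 = 0 := by linear_combination (1/2 : ℝ) * (hskew₁ 2 2 2 0)
  have h2221 : R 2 2 2 1 = 0 := by linear_combination (1/2 : ℝ) * (hskew₁ 2 2 2 1)
  have h2222 : R 2 2 2 2 = 0 := by linear_combination (1/2 : ℝ) * (hskew₁ 2 2 2 2)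
  have h2223 : R 2 2 2 3 = 0 := by linear_combination (1/2 : ℝ) * (hskew₁ 2 2 2 3)
  have h2230 : R 2 2 3 0 = 0 := by linear_combination (1/2 : ℝ) * (hskew₁ 2 2 3 0)
  have h2231 : R 2 2 3 1 = 0 := by linear_combination (1/2 : ℝ) * (hskew₁ 2 2 3 1)
  have h2232 : R 2 2 3 2 = 0 := by linear_combination (1/2 : ℝ) * (hskew₁ 2 2 3 2)
  have h2233 : R 2 2 3 3 = 0 := by linear_combination (1/2 : ℝ) * (hskew₁ 2 2 3 3)
  have h2300 : R 2 3 0 0 = 0 := by linear_combination (1/2 : ℝ) * (hskew₂ 2 3 0 0)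
  have h2301 : R 2 3 0 1 = R 0 1 2 3 := by linear_combination (1 : ℝ) * (hpair 2 3 0 1)
  have h2302 : R 2 3 0 2 = R 0 2 2 3 := by linear_combination (1 : ℝ) * (hpair 2 3 0 2)
  have h2303 : R 2 3 0 3 = R 0 3 2 3 := by linear_combination (1 : ℝ) * (hpair 2 3 0 3)
  have h2310 : R 2 3 1 0 = -R 0 1 2 3 := by linear_combination (1 : ℝ) * (hskew₂ 2 3 1 0) + (-1 : ℝ) * (hpair 2 3 0 1)
  have h2311 : R 2 3 1 1 = 0 := by linear_combination (1/2 : ℝ) * (hskew₂ 2 3 1 1)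
  have h2312 : R 2 3 1 2 = R 1 2 2 3 := by linear_combination (1 : ℝ) * (hpair 2 3 1 2)
  have h2313 : R 2 3 1 3 = R 1 3 2 3 := by linear_combination (1 : ℝ) * (hpair 2 3 1 3)
  have h2320 : R 2 3 2 0 = -R 0 2 2 3 := by linear_combination (1 : ℝ) * (hskew₂ 2 3 2 0) + (-1 : ℝ) * (hpair 2 3 0 2)
  have h2321 : R 2 3 2 1 = -R 1 2 2 3 := by linear_combination (1 : ℝ) * (hskew₂ 2 3 2 1) + (-1 : ℝ) * (hpair 2 3 1 2)
  have h2322 : R 2 3 2 2 = 0 := by linear_combination (1/2 : ℝ) * (hskew₂ 2 3 2 2)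
  have h2330 : R 2 3 3 0 = -R 0 3 2 3 := by linear_combination (1 : ℝ) * (hskew₂ 2 3 3 0) + (-1 : ℝ) * (hpair 2 3 0 3)
  have h2331 : R 2 3 3 1 = -R 1 3 2 3 := by linear_combination (1 : ℝ) * (hskew₂ 2 3 3 1) + (-1 : ℝ) * (hpair 2 3 1 3)
  have h2332 : R 2 3 3 2 = -R 2 3 2 3 := by linear_combination (1 : ℝ) * (hskew₂ 2 3 3 2)
  have h2333 : R 2 3 3 3 = 0 := by linear_combination (1/2 : ℝ) * (hskew₂ 2 3 3 3)
  have h3000 : R 3 0 0 0 = 0 := by linear_combination (1/2 : ℝ) * (hskew₂ 3 0 0 0)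
  have h3001 : R 3 0 0 1 = -R 0 1 0 3 := by linear_combination (1 : ℝ) * (hskew₁ 3 0 0 1) + (-1 : ℝ) * (hpair 0 3 0 1)
  have h3002 : R 3 0 0 2 = -R 0 2 0 3 := by linear_combination (1 : ℝ) * (hskew₁ 3 0 0 2) + (-1 : ℝ) * (hpair 0 3 0 2)
  have h3003 : R 3 0 0 3 = -R 0 3 0 3 := by linear_combination (1 : ℝ) * (hskew₁ 3 0 0 3)
  have h3010 : R 3 0 1 0 = R 0 1 0 3 := by linear_combination (1 : ℝ) * (hskew₁ 3 0 1 0) + (-1 : ℝ) * (hskew₂ 0 3 1 0) + (1 : ℝ) * (hpair 0 3 0 1)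
  have h3011 : R 3 0 1 1 = 0 := by linear_combination (1/2 : ℝ) * (hskew₂ 3 0 1 1)
  have h3012 : R 3 0 1 2 = -R 0 3 1 2 := by linear_combination (1 : ℝ) * (hskew₁ 3 0 1 2)
  have h3013 : R 3 0 1 3 = -R 0 3 1 3 := by linear_combination (1 : ℝ) * (hskew₁ 3 0 1 3)
  have h3020 : R 3 0 2 0 = R 0 2 0 3 := by linear_combination (1 : ℝ) * (hskew₁ 3 0 2 0) + (-1 : ℝ) * (hskew₂ 0 3 2 0) + (1 : ℝ) * (hpair 0 3 0 2)
  have h3021 : R 3 0 2 1 = R 0 3 1 2 := by linear_combination (1 : ℝ) * (hskew₁ 3 0 2 1) + (-1 : ℝ) * (hskew₂ 0 3 2 1)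
  have h3022 : R 3 0 2 2 = 0 := by linear_combination (1/2 : ℝ) * (hskew₂ 3 0 2 2)
  have h3023 : R 3 0 2 3 = -R 0 3 2 3 := by linear_combination (1 : ℝ) * (hskew₁ 3 0 2 3)
  have h3030 : R 3 0 3 0 = R 0 3 0 3 := by linear_combination (1 : ℝ) * (hskew₁ 3 0 3 0) + (-1 : ℝ) * (hskew₂ 0 3 3 0)
  have h3031 : R 3 0 3 1 = R 0 3 1 3 := by linear_combination (1 : ℝ) * (hskew₁ 3 0 3 1) + (-1 : ℝ) * (hskew₂ 0 3 3 1)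
  have h3032 : R 3 0 3 2 = R 0 3 2 3 := by linear_combination (1 : ℝ) * (hskew₁ 3 0 3 2) + (-1 : ℝ) * (hskew₂ 0 3 3 2)
  have h3033 : R 3 0 3 3 = 0 := by linear_combination (1/2 : ℝ) * (hskew₂ 3 0 3 3)
  have h3100 : R 3 1 0 0 = 0 := by linear_combination (1/2 : ℝ) * (hskew₂ 3 1 0 0)
  have h3101 : R 3 1 0 1 = -R 0 1 1 3 := by linear_combination (1 : ℝ) * (hskew₁ 3 1 0 1) + (-1 : ℝ) * (hpair 1 3 0 1)
  have h3102 : R 3 1 0 2 = -R 0 2 1 3 := by linear_combination (1 : ℝ) * (hskew₁ 3 1 0 2) + (-1 : ℝ) * (hpair 1 3 0 2)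
  have h3103 : R 3 1 0 3 = -R 0 3 1 3 := by linear_combination (1 : ℝ) * (hskew₁ 3 1 0 3) + (-1 : ℝ) * (hpair 1 3 0 3)
  have h3110 : R 3 1 1 0 = R 0 1 1 3 := by linear_combination (1 : ℝ) * (hskew₁ 3 1 1 0) + (-1 : ℝ) * (hskew₂ 1 3 1 0) + (1 : ℝ) * (hpair 1 3 0 1)
  have h3111 : R 3 1 1 1 = 0 := by linear_combination (1/2 : ℝ) * (hskew₂ 3 1 1 1)
  have h3112 : R 3 1 1 2 = -R 1 2 1 3 := by linear_combination (1 : ℝ) * (hskew₁ 3 1 1 2) + (-1 : ℝ) * (hpair 1 3 1 2)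
  have h3113 : R 3 1 1 3 = -R 1 3 1 3 := by linear_combination (1 : ℝ) * (hskew₁ 3 1 1 3)
  have h3120 : R 3 1 2 0 = R 0 2 1 3 := by linear_combination (1 : ℝ) * (hskew₁ 3 1 2 0) + (-1 : ℝ) * (hskew₂ 1 3 2 0) + (1 : ℝ) * (hpair 1 3 0 2)
  have h3121 : R 3 1 2 1 = R 1 2 1 3 := by linear_combination (1 : ℝ) * (hskew₁ 3 1 2 1) + (-1 : ℝ) * (hskew₂ 1 3 2 1) + (1 : ℝ) * (hpair 1 3 1 2)
  have h3122 : R 3 1 2 2 = 0 := by linear_combination (1/2 : ℝ) * (hskew₂ 3 1 2 2)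
  have h3123 : R 3 1 2 3 = -R 1 3 2 3 := by linear_combination (1 : ℝ) * (hskew₁ 3 1 2 3)
  have h3130 : R 3 1 3 0 = R 0 3 1 3 := by linear_combination (1 : ℝ) * (hskew₁ 3 1 3 0) + (-1 : ℝ) * (hskew₂ 1 3 3 0) + (1 : ℝ) * (hpair 1 3 0 3)
  have h3131 : R 3 1 3 1 = R 1 3 1 3 := by linear_combination (1 : ℝ) * (hskew₁ 3 1 3 1) + (-1 : ℝ) * (hskew₂ 1 3 3 1)
  have h3132 : R 3 1 3 2 = R 1 3 2 3 := by linear_combination (1 : ℝ) * (hskew₁ 3 1 3 2) + (-1 : ℝ) * (hskew₂ 1 3 3 2)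
  have h3133 : R 3 1 3 3 = 0 := by linear_combination (1/2 : ℝ) * (hskew₂ 3 1 3 3)
  have h3200 : R 3 2 0 0 = 0 := by linear_combination (1/2 : ℝ) * (hskew₂ 3 2 0 0)
  have h3201 : R 3 2 0 1 = -R 0 1 2 3 := by linear_combination (1 : ℝ) * (hskew₁ 3 2 0 1) + (-1 : ℝ) * (hpair 2 3 0 1)
  have h3202 : R 3 2 0 2 = -R 0 2 2 3 := by linear_combination (1 : ℝ) * (hskew₁ 3 2 0 2) + (-1 : ℝ) * (hpair 2 3 0 2)
  have h3203 : R 3 2 0 3 = -R 0 3 2 3 := by linear_combination (1 : ℝ) * (hskew₁ 3 2 0 3) + (-1 : ℝ) * (hpair 2 3 0 3)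
  have h3210 : R 3 2 1 0 = R 0 1 2 3 := by linear_combination (1 : ℝ) * (hskew₁ 3 2 1 0) + (-1 : ℝ) * (hskew₂ 2 3 1 0) + (1 : ℝ) * (hpair 2 3 0 1)
  have h3211 : R 3 2 1 1 = 0 := by linear_combination (1/2 : ℝ) * (hskew₂ 3 2 1 1)
  have h3212 : R 3 2 1 2 = -R 1 2 2 3 := by linear_combination (1 : ℝ) * (hskew₁ 3 2 1 2) + (-1 : ℝ) * (hpair 2 3 1 2)
  have h3213 : R 3 2 1 3 = -R 1 3 2 3 := by linear_combination (1 : ℝ) * (hskew₁ 3 2 1 3) + (-1 : ℝ) * (hpair 2 3 1 3)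
  have h3220 : R 3 2 2 0 = R 0 2 2 3 := by linear_combination (1 : ℝ) * (hskew₁ 3 2 2 0) + (-1 : ℝ) * (hskew₂ 2 3 2 0) + (1 : ℝ) * (hpair 2 3 0 2)
  have h3221 : R 3 2 2 1 = R 1 2 2 3 := by linear_combination (1 : ℝ) * (hskew₁ 3 2 2 1) + (-1 : ℝ) * (hskew₂ 2 3 2 1) + (1 : ℝ) * (hpair 2 3 1 2)
  have h3222 : R 3 2 2 2 = 0 := by linear_combination (1/2 : ℝ) * (hskew₂ 3 2 2 2)
  have h3223 : R 3 2 2 3 = -R 2 3 2 3 := by linear_combination (1 : ℝ) * (hskew₁ 3 2 2 3)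
  have h3230 : R 3 2 3 0 = R 0 3 2 3 := by linear_combination (1 : ℝ) * (hskew₁ 3 2 3 0) + (-1 : ℝ) * (hskew₂ 2 3 3 0) + (1 : ℝ) * (hpair 2 3 0 3)
  have h3231 : R 3 2 3 1 = R 1 3 2 3 := by linear_combination (1 : ℝ) * (hskew₁ 3 2 3 1) + (-1 : ℝ) * (hskew₂ 2 3 3 1) + (1 : ℝ) * (hpair 2 3 1 3)
  have h3232 : R 3 2 3 2 = R 2 3 2 3 := by linear_combination (1 : ℝ) * (hskew₁ 3 2 3 2) + (-1 : ℝ) * (hskew₂ 2 3 3 2)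
  have h3233 : R 3 2 3 3 = 0 := by linear_combination (1/2 : ℝ) * (hskew₂ 3 2 3 3)
  have h3300 : R 3 3 0 0 = 0 := by linear_combination (1/2 : ℝ) * (hskew₁ 3 3 0 0)
  have h3301 : R 3 3 0 1 = 0 := by linear_combination (1/2 : ℝ) * (hskew₁ 3 3 0 1)
  have h3302 : R 3 3 0 2 = 0 := by linear_combination (1/2 : ℝ) * (hskew₁ 3 3 0 2)
  have h3303 : R 3 3 0 3 = 0 := by linear_combination (1/2 : ℝ) * (hskew₁ 3 3 0 3)
  have h3310 : R 3 3 1 0 = 0 := by linear_combination (1/2 : ℝ) * (hskew₁ 3 3 1 0)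
  have h3311 : R 3 3 1 1 = 0 := by linear_combination (1/2 : ℝ) * (hskew₁ 3 3 1 1)
  have h3312 : R 3 3 1 2 = 0 := by linear_combination (1/2 : ℝ) * (hskew₁ 3 3 1 2)
  have h3313 : R 3 3 1 3 = 0 := by linear_combination (1/2 : ℝ) * (hskew₁ 3 3 1 3)
  have h3320 : R 3 3 2 0 = 0 := by linear_combination (1/2 : ℝ) * (hskew₁ 3 3 2 0)
  have h3321 : R 3 3 2 1 = 0 := by linear_combination (1/2 : ℝ) * (hskew₁ 3 3 2 1)
  have h3322 : R 3 3 2 2 = 0 := by linear_combination (1/2 : ℝ) * (hskew₁ 3 3 2 2)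
  have h3323 : R 3 3 2 3 = 0 := by linear_combination (1/2 : ℝ) * (hskew₁ 3 3 2 3)
  have h3330 : R 3 3 3 0 = 0 := by linear_combination (1/2 : ℝ) * (hskew₁ 3 3 3 0)
  have h3331 : R 3 3 3 1 = 0 := by linear_combination (1/2 : ℝ) * (hskew₁ 3 3 3 1)
  have h3332 : R 3 3 3 2 = 0 := by linear_combination (1/2 : ℝ) * (hskew₁ 3 3 3 2)
  have h3333 : R 3 3 3 3 = 0 := by linear_combination (1/2 : ℝ) * (hskew₁ 3 3 3 3)
  rw [Matrix.trace]
  simp only [Matrix.diag, Matrix.mul_apply, Matrix.sub_apply, Matrix.smul_apply,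
    Bmat, Cmat, Matrix.of_apply, smul_eq_mul, ricci4]
  rw [Finset.sum_congr rfl (fun p _ => sum_pairIdx _)]
  rw [sum_pairIdx]
  simp only [Fin.sum_univ_six, Fin.sum_univ_four, pairOfFin6, kdelta, Fin.reduceEq, reduceIte,
    Fin.isValue]

  simp only [h0000, h0001, h0002, h0003, h0010, h0011, h0012, h0013, h0020, h0021, h0022, h0023, h0030, h0031, h0032, h0033, h0100, h0110, h0111, h0120, h0121, h0122, h0130, h0131, h0132, h0133, h0200, h0201, h0210, h0211, h0220, h0221, h0222, h0230, h0231, h0232, h0233, h0300, h0301, h0302, h0310, h0311, h0320, h0321, h0322, h0330, h0331, h0332, h0333, h1000, h1001, h1002, h1003, h1010, h1011, h1012, h1013, h1020, h1021, h1022, h1023, h1030, h1031, h1032, h1033, h1100, h1101, h1102, h1103, h1110, h1111, h1112, h1113, h1120, h1121, h1122, h1123, h1130, h1131, h1132, h1133, h1200, h1201, h1202, h1203, h1210, h1211, h1220, h1221, h1222, h1230, h1231, h1232, h1233, h1300, h1301, h1302, h1303, h1310, h1311, h1312, h1320, h1321, h1322, h1330, h1331, h1332, h1333, h2000, h2001,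 h2002, h2003, h2010, h2011, h2012, h2013, h2020, h2021, h2022, h2023, h2030, h2031, h2032, h2033, h2100, h2101, h2102, h2103, h2110, h2111, h2112, h2113, h2120, h2121, h2122, h2123, h2130, h2131, h2132, h2133, h2200, h2201, h2202, h2203, h2210, h2211, h2212, h2213, h2220, h2221, h2222, h2223, h2230, h2231, h2232, h2233, h2300, h2301, h2302, h2303, h2310, h2311, h2312, h2313, h2320, h2321, h2322, h2330, h2331, h2332, h2333, h3000, h3001, h3002, h3003, h3010, h3011, h3012, h3013, h3020, h3021, h3022, h3023, h3030, h3031, h3032, h3033, h3100, h3101, h3102, h3103, h3110, h3111, h3112, h3113, h3120, h3121, h3122, h3123, h3130, h3131, h3132, h3133, h3200, h3201, h3202, h3203, h3210, h3211, h3212, h3213, h3220, h3221, h3222, h3223, h3230, h3231, h3232, h3233, h3300, h3301, h3302, h3303, h3310, h3311, h3312, h3313, h3320, h3321, h3322, h3323, h3330, h3331, h3332, h3333]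
  ring
end
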